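/- arXiv:2209.03775 — 7 statements merged into one kernel-verified Lean document; each statement's English description precedes it below -/
import Mathlib

section
/- For all integers n and p with n ≥ p ≥ 2, the number of permutations π of {1,…,n} that have exactly n−p+1 left-to-right minima and satisfy π(n) ≠ 1 equals (n−1)·c(n−1, n−p+1). -/
/-- The signless Stirling number of the first kind `c(n, k)`: the number of permutations
of `{1, …, n}` with exactly `k` cycles (`c(n, k) = 0` for `k > n`). -/
def stirlingC : ℕ → ℕ → ℕ
  | 0, 0 => 1
  | 0, _ + 1 => 0
  | _ + 1, 0 => 0
  | n + 1, k + 1 => n * stirlingC n (k + 1) + stirlingC n k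

open Finset Equiv

/-- The number of left-to-right minima of a permutation. -/
def lrmin {n : ℕ} (π : Equiv.Perm (Fin n)) : ℕ :=
  (Finset.univ.filter fun i : Fin n => ∀ j, j < i → π i < π j).card

/-- Extend a permutation of `Fin n` to one of `Fin (n+1)` whose last value is `v`. -/
def extPerm {n : ℕ} (v : Fin (n + 1)) (σ : Equiv.Perm (Fin n)) : Equiv.Perm (Fin (n + 1)) :=
  (finSuccEquiv' (Fin.last n)).trans (σ.optionCongr.trans (finSuccEquiv' v).symm)

@[simp] lemma extPerm_last {n : ℕ} (v : Fin (n+1)) (σ : Equiv.Perm (Fin n)) :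
    extPerm v σ (Fin.last n) = v := by
  simp [extPerm, finSuccEquiv'_at, finSuccEquiv'_symm_none]

@[simp] lemma extPerm_castSucc {n : ℕ} (v : Fin (n+1)) (σ : Equiv.Perm (Fin n)) (i : Fin n) :
    extPerm v σ i.castSucc = v.succAbove (σ i) := by
  simp only [extPerm, Equiv.trans_apply,
    finSuccEquiv'_below (Fin.castSucc_lt_last i), Equiv.optionCongr_apply,
    Option.map_some, finSuccEquiv'_symm_some]

lemma extPerm_injective {n : ℕ} (v : Fin (n+1)) : Function.Injective (extPerm (n := n) v) := by
  intro σ τ h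
  apply Equiv.ext; intro i
  have := Equiv.ext_iff.mp h i.castSucc
  simp only [extPerm_castSucc] at this
  exact Fin.succAbove_right_injective this

lemma extPerm_surj {n : ℕ} (v : Fin (n+1)) (π : Equiv.Perm (Fin (n+1)))
    (h : π (Fin.last n) = v) : ∃ σ, extPerm v σ = π := by
  refine ⟨Equiv.removeNone ((finSuccEquiv' (Fin.last n)).symm.trans (π.trans (finSuccEquiv' v))), ?_⟩
  set e := (finSuccEquiv' (Fin.last n)).symm.trans (π.trans (finSuccEquiv' v)) with he
  ext x
  induction x using Fin.lastCases with
  | last => simp [h]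
  | cast i =>
      rw [extPerm_castSucc]
      have hne : π i.castSucc ≠ v := by
        rw [← h]; exact fun hc => (Fin.castSucc_lt_last i).ne (π.injective hc)
      have h1 : e (some i) = finSuccEquiv' v (π i.castSucc) := by
        simp [he, finSuccEquiv'_symm_some, Fin.succAbove_last_apply]
      have h2 : ∃ y, e (some i) = some y := by
        rw [h1]
        rcases Option.eq_none_or_eq_some (finSuccEquiv' v (π i.castSucc)) with hn | hs
        · exfalso; apply hne
          have := (finSuccEquiv' v).injective (hn.trans (finSuccEquiv'_at v).symm)
          exact this
        · exact hs
      have h3 := Equiv.removeNone_some e h2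
      rw [h1] at h3
      have := congrArg (finSuccEquiv' v).symm h3
      simp only [Equiv.symm_apply_apply] at this
      rw [← this, finSuccEquiv'_symm_some]

lemma lrmin_extPerm {n : ℕ} (v : Fin (n+1)) (σ : Equiv.Perm (Fin n)) :
    lrmin (extPerm v σ) = lrmin σ + (if v = 0 then 1 else 0) := by
  classical
  have hmin : ∀ i : Fin n,
      (∀ j, j < i.castSucc → extPerm v σ i.castSucc < extPerm v σ j) ↔
      (∀ j, j < i → σ i < σ j) := by
    intro i
    constructor
    · intro H j hj
      have := H j.castSucc (by exact_mod_cast Fin.castSucc_lt_castSucc_iff.mpr hj)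
      simpa [Fin.succAbove_lt_succAbove_iff] using this
    · intro H j hj
      have hjl : j ≠ Fin.last n := (lt_of_lt_of_le hj (Fin.le_last i.castSucc)).ne
      obtain ⟨j', rfl⟩ := Fin.exists_castSucc_eq.mpr hjl
      have hj' : j' < i := Fin.castSucc_lt_castSucc_iff.mp hj
      simpa [Fin.succAbove_lt_succAbove_iff] using H j' hj'
  have hlast : (∀ j, j < Fin.last n → extPerm v σ (Fin.last n) < extPerm v σ j) ↔ v = 0 := by
    constructor
    · intro H
      by_contra hv
      have hn : 0 < n := by
        rcases Nat.eq_zero_or_pos n with h0 | h; · subst h0; exact absurd (Fin.fin_one_eq_zero v) hv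
        exact h
      set z : Fin n := ⟨0, hn⟩ with hz
      have h1 := H (σ.symm z).castSucc (Fin.castSucc_lt_last _)
      rw [extPerm_last, extPerm_castSucc, Equiv.apply_symm_apply] at h1
      have hz0 : v.succAbove z = z.castSucc := Fin.succAbove_of_castSucc_lt _ _ (by
        simp only [hz]
        exact lt_of_le_of_ne (Fin.zero_le _) (by simpa using (Ne.symm hv)))
      rw [hz0] at h1
      simp [hz, Fin.lt_def] at h1
    · rintro rfl j hj
      rw [extPerm_last]
      obtain ⟨j', rfl⟩ := Fin.exists_castSucc_eq.mpr hj.ne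
      rw [extPerm_castSucc]
      exact Fin.pos_iff_ne_zero.mpr (Fin.succAbove_ne _ _)
  have hcard : #(filter ((fun i => ∀ j, j < i → extPerm v σ i < extPerm v σ j) ∘ ⇑Fin.castSuccEmb) univ)
      = lrmin σ := by
    unfold lrmin
    refine congrArg Finset.card (Finset.filter_congr fun i _ => ?_)
    simp only [Function.comp_apply, Fin.coe_castSuccEmb]
    simpa using (hmin i)
  unfold lrmin
  rw [Fin.univ_castSuccEmb, filter_cons]
  by_cases hv : v = 0
  · rw [if_pos (hlast.mpr hv), if_pos hv, card_cons, filter_map, card_map, hcard]; rfl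
  · rw [if_neg (fun h => hv (hlast.mp h)), if_neg hv, filter_map, card_map, hcard, Nat.add_zero]; rfl

lemma card_fiber {n : ℕ} (v : Fin (n+1)) (k : ℕ) :
    (univ.filter fun π : Equiv.Perm (Fin (n+1)) => lrmin π = k ∧ π (Fin.last n) = v).card
      = (univ.filter fun σ : Equiv.Perm (Fin n) => lrmin σ + (if v = 0 then 1 else 0) = k).card := by
  classical
  symm
  refine Finset.card_bij (fun σ _ => extPerm v σ) ?_ ?_ ?_
  · intro σ hσ
    simp only [mem_filter, mem_univ, true_and] at hσ ⊢
    exact ⟨by rw [lrmin_extPerm, hσ], extPerm_last v σ⟩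
  · intro σ₁ _ σ₂ _ h
    exact extPerm_injective v h
  · intro π hπ
    simp only [mem_filter, mem_univ, true_and] at hπ
    obtain ⟨σ, rfl⟩ := extPerm_surj v π hπ.2
    exact ⟨σ, by simp only [mem_filter, mem_univ, true_and]; rw [← hπ.1, lrmin_extPerm], rfl⟩

lemma card_all : ∀ (n k : ℕ),
    (univ.filter fun π : Equiv.Perm (Fin n) => lrmin π = k).card = stirlingC n k := by
  intro n
  induction n with
  | zero =>
      intro k
      have h0 : ∀ π : Equiv.Perm (Fin 0), lrmin π = 0 := by
        intro π; simp [lrmin]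
      cases k with
      | zero =>
          rw [show stirlingC 0 0 = 1 from rfl]
          rw [Finset.filter_true_of_mem (fun π _ => h0 π)]
          simp
      | succ k =>
          rw [show stirlingC 0 (k+1) = 0 from rfl, Finset.card_eq_zero]
          refine Finset.filter_false_of_mem (fun π _ => ?_)
          rw [h0 π]; omega
  | succ m ih =>
      intro k
      classical
      rw [Finset.card_eq_sum_card_fiberwise
        (f := fun π : Equiv.Perm (Fin (m+1)) => π (Fin.last m)) (t := univ) (fun x _ => mem_univ _)]
      have hfib : ∀ v : Fin (m+1),
          ((univ.filter fun π : Equiv.Perm (Fin (m+1)) => lrmin π = k).filter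
            fun π => π (Fin.last m) = v).card
          = if v = 0 then (if k = 0 then 0 else stirlingC m (k-1)) else stirlingC m k := by
        intro v
        rw [Finset.filter_filter, card_fiber v k]
        by_cases hv : v = 0
        · simp only [hv, if_pos]
          cases k with
          | zero =>
              rw [if_pos rfl, Finset.card_eq_zero]
              refine Finset.filter_false_of_mem (fun σ _ => by simp)
          | succ k =>
              rw [if_neg (by omega), show k+1-1 = k from rfl, ← ih k]
              exact congrArg Finset.card (Finset.filter_congr fun σ _ => by simp)
        · rw [if_neg hv, if_neg hv, ← ih k]
          exact congrArg Finset.card (Finset.filter_congr fun σ _ => by simp [hv])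
      rw [Finset.sum_congr rfl (fun v _ => hfib v), Fin.sum_univ_succ, if_pos rfl,
        Finset.sum_congr rfl (fun i _ => if_neg (Fin.succ_ne_zero i)), Finset.sum_const,
        Finset.card_univ, Fintype.card_fin, smul_eq_mul]
      cases k with
      | zero =>
          rw [if_pos rfl]
          cases m with
          | zero => rfl
          | succ m => rw [show stirlingC (m+1+1) 0 = 0 from rfl,
              show stirlingC (m+1) 0 = 0 from rfl]; ring
      | succ k =>
          rw [if_neg (Nat.succ_ne_zero k), Nat.add_sub_cancel,
            show stirlingC (m+1) (k+1) = m * stirlingC m (k+1) + stirlingC m k from rfl]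
          omega

lemma card_ne (m k : ℕ) :
    (univ.filter fun π : Equiv.Perm (Fin (m+1)) => lrmin π = k ∧ π (Fin.last m) ≠ 0).card
      = m * stirlingC m k := by
  classical
  rw [Finset.card_eq_sum_card_fiberwise (f := fun π : Equiv.Perm (Fin (m+1)) => π (Fin.last m))
    (t := univ.filter (· ≠ (0 : Fin (m+1))))
    (fun π hπ => by have hπ' : π ∈ univ.filter (fun π : Equiv.Perm (Fin (m+1)) => lrmin π = k ∧ π (Fin.last m) ≠ 0) := hπ; exact Finset.mem_filter.mpr ⟨mem_univ _, (Finset.mem_filter.mp hπ').2.2⟩)]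
  have hterm : ∀ v ∈ univ.filter (· ≠ (0 : Fin (m+1))),
      ((univ.filter fun π : Equiv.Perm (Fin (m+1)) => lrmin π = k ∧ π (Fin.last m) ≠ 0).filter
        fun π => π (Fin.last m) = v).card = stirlingC m k := by
    intro v hv
    simp only [mem_filter, mem_univ, true_and] at hv
    rw [Finset.filter_filter]
    have heq : (univ.filter fun π : Equiv.Perm (Fin (m+1)) =>
        (lrmin π = k ∧ π (Fin.last m) ≠ 0) ∧ π (Fin.last m) = v)
        = univ.filter fun π => lrmin π = k ∧ π (Fin.last m) = v := by
      refine Finset.filter_congr fun π _ => ?_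
      constructor
      · rintro ⟨⟨h1, _⟩, h3⟩; exact ⟨h1, h3⟩
      · rintro ⟨h1, h3⟩; exact ⟨⟨h1, h3 ▸ hv⟩, h3⟩
    rw [heq, card_fiber v k, ← card_all m k]
    exact congrArg Finset.card (Finset.filter_congr fun σ _ => by simp [hv])
  rw [Finset.sum_congr rfl hterm, Finset.sum_const, smul_eq_mul, Finset.filter_ne' univ 0,
    Finset.card_erase_of_mem (mem_univ _), Finset.card_univ, Fintype.card_fin,
    Nat.add_sub_cancel]

/-- For `n ≥ p ≥ 2`, the number of permutations `π` of `{1, …, n}` having exactly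
`n − p + 1` left-to-right minima and with `π(n) ≠ 1` equals `(n − 1)·c(n − 1, n − p + 1)`. -/
theorem count_complete_games (n p : ℕ) (hp : 2 ≤ p) (hpn : p ≤ n) :
    {π : Equiv.Perm (Fin n) |
        (Finset.univ.filter fun i : Fin n => ∀ j, j < i → π i < π j).card = n - p + 1 ∧
        π ⟨n - 1, by omega⟩ ≠ ⟨0, by omega⟩}.ncard
      = (n - 1) * stirlingC (n - 1) (n - p + 1) := by
  classical
  obtain ⟨m, rfl⟩ : ∃ m, n = m + 1 := ⟨n - 1, by omega⟩
  have hidx : (⟨m + 1 - 1, by omega⟩ : Fin (m + 1)) = Fin.last m := rfl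
  have hzero : (⟨0, by omega⟩ : Fin (m + 1)) = 0 := by ext; simp
  have hset : {π : Equiv.Perm (Fin (m + 1)) |
        (Finset.univ.filter fun i : Fin (m + 1) => ∀ j, j < i → π i < π j).card = m + 1 - p + 1 ∧
        π ⟨m + 1 - 1, by omega⟩ ≠ ⟨0, by omega⟩}
      = ↑(univ.filter fun π : Equiv.Perm (Fin (m + 1)) =>
          lrmin π = m + 1 - p + 1 ∧ π (Fin.last m) ≠ 0) := by
    ext π
    simp only [Set.mem_setOf_eq, Finset.coe_filter, Finset.mem_univ, true_and, hidx, hzero]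
    exact Iff.rfl
  rw [hset, Set.ncard_coe_finset, card_ne, Nat.add_sub_cancel]
end

section
/- For all integers p ≥ 2 and n ≥ 1, Q_{n,p}(1) = (n−1)·c(n−1, n+1−p)/n!. -/
open MeasureTheory intervalIntegral

/-- `Q n p x` : probability that a dart game with `p` remaining players, where the
probability of beating the best throw so far is `x`, ends after exactly `n` further throws. -/
noncomputable def Q : ℕ → ℕ → ℝ → ℝ
  | 0, p, _ => if p = 1 then 1 else 0
  | n + 1, p, x =>
      if p ≤ 1 then 0
      else (1 - x) * Q n (p - 1) x + ∫ v in (0:ℝ)..x, Q n p v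

def Bn : ℕ → ℕ → ℕ → ℕ
  | 0, p, a => if p = 1 ∧ a = 0 then 1 else 0
  | n+1, p, a => if p ≤ 1 then 0 else
      a * Bn n (p-1) (a-1) + ∑ b ∈ Finset.Ico a (n+1), Bn n p b

def Bc (n a k : ℕ) : ℕ :=
  if k = 0 then (if a = n then n.factorial else 0)
  else if n ≤ a then 0
  else a.factorial * ((if a = 0 then 0 else (n-1).choose (a-1) * stirlingC (n-1-a) (k-1))
        + (n-1-a) * n.choose a * stirlingC (n-1-a) k)

def Sc (n a k : ℕ) : ℕ :=
  if n < a then 0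
  else if k = 0 then n.factorial
  else a.factorial * ((if a = 0 then 0 else (n-1).choose (a-1) * stirlingC (n-a) k)
        + (n-a) * n.choose a * stirlingC (n-a) (k+1))

lemma stirlingC_zero (m : ℕ) : stirlingC (m+1) 0 = 0 := rfl

lemma stirlingC_eq_zero_of_lt : ∀ m k : ℕ, m < k → stirlingC m k = 0 := by
  intro m
  induction m with
  | zero => intro k hk; obtain ⟨k', rfl⟩ : ∃ k', k = k' + 1 := ⟨k-1, by omega⟩; rfl
  | succ m ih =>
    intro k hk
    obtain ⟨k', rfl⟩ : ∃ k', k = k' + 1 := ⟨k-1, by omega⟩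
    show m * stirlingC m (k'+1) + stirlingC m k' = 0
    rw [ih (k'+1) (by omega), ih k' (by omega)]; ring

lemma stirlingC_one (m : ℕ) : stirlingC (m+1) 1 = m.factorial := by
  induction m with
  | zero => rfl
  | succ m ih =>
    show (m+1) * stirlingC (m+1) 1 + stirlingC (m+1) 0 = _
    rw [ih, stirlingC_zero, Nat.factorial_succ]; ring

lemma stirlingC_diag (m : ℕ) : stirlingC m m = 1 := by
  induction m with
  | zero => rfl
  | succ m ih =>
    show m * stirlingC m (m+1) + stirlingC m m = 1
    rw [ih, stirlingC_eq_zero_of_lt m (m+1) (by omega)]; ring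

lemma stirlingC_rec (m k : ℕ) :
    stirlingC (m+1) (k+1) = m * stirlingC m (k+1) + stirlingC m k := rfl

lemma ID1 (n a k : ℕ) (h : a ≤ n) (hn : 1 ≤ n) :
    Bc n a k + Sc n (a+1) k = Sc n a k := by
  rcases Nat.eq_zero_or_pos k with rfl | hK
  · unfold Bc Sc
    rcases eq_or_lt_of_le h with rfl | hlt
    · rw [if_pos rfl, if_pos rfl, if_pos (by omega : a < a + 1), if_neg (by omega : ¬ a < a),
        if_pos rfl]
      omega
    · rw [if_pos rfl, if_neg (by omega : ¬ a = n), if_neg (by omega : ¬ n < a + 1),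
        if_pos rfl, if_neg (by omega : ¬ n < a), if_pos rfl]
      omega
  · obtain ⟨K, rfl⟩ : ∃ K, k = K + 1 := ⟨k - 1, by omega⟩
    rcases eq_or_lt_of_le h with rfl | hlt
    · -- a = n : all three terms vanish
      unfold Bc Sc
      simp only [if_neg (by omega : ¬ K + 1 = 0), if_pos (le_refl a),
        if_pos (by omega : a < a + 1), if_neg (by omega : ¬ a < a),
        Nat.sub_self]
      have hz : ∀ j, stirlingC 0 (j+1) = 0 := fun j => rfl
      rw [hz, hz]
      simp
    · -- a < n
      obtain ⟨M, rfl⟩ : ∃ M, n = a + 1 + M := ⟨n - a - 1, by omega⟩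
      unfold Bc Sc
      have e1 : a + 1 + M - 1 - a = M := by omega
      have e2 : a + 1 + M - a = M + 1 := by omega
      have e3 : a + 1 + M - (a + 1) = M := by omega
      have e4 : a + 1 + M - 1 = a + M := by omega
      have e5 : K + 1 - 1 = K := by omega
      have e6 : a + 1 - 1 = a := by omega
      have e8 : a + 1 + M - (a + 1) = M := by omega
      have e9 : a + M - a = M := by omega
      simp only [if_neg (by omega : ¬ K + 1 = 0), if_neg (by omega : ¬ a + 1 + M ≤ a),
        if_neg (by omega : ¬ a + 1 + M < a + 1), if_neg (by omega : ¬ a + 1 + M < a),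
        if_neg (by omega : ¬ a + 1 = 0), e1, e2, e3, e4, e5, e6, e8, e9, Nat.sub_zero,
        stirlingC_rec M K, stirlingC_rec M (K+1)]
      have hC2 : (a + 1 + M).choose (a+1) * (a+1) = (a + 1 + M).choose a * (M+1) := by
        have := Nat.choose_succ_right_eq (a + 1 + M) a
        rw [e2] at this; exact this
      rcases Nat.eq_zero_or_pos a with rfl | hA
      · simp only [if_pos rfl, Nat.factorial_zero, Nat.factorial_one, Nat.choose_zero_right,
          Nat.zero_add, eq_self_iff_true, if_true, Nat.sub_zero]
        zify
        rw [Nat.choose_one_right]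
        push_cast
        ring
      · obtain ⟨a'', rfl⟩ : ∃ a'', a = a'' + 1 := ⟨a - 1, by omega⟩
        simp only [if_neg (by omega : ¬ a'' + 1 = 0), Nat.add_sub_cancel]
        have hPascal : (a'' + 1 + 1 + M).choose (a''+1) =
            (a'' + 1 + M).choose a'' + (a'' + 1 + M).choose (a''+1) := by
          have h7 : a'' + 1 + 1 + M = (a'' + 1 + M) + 1 := by omega
          rw [h7, Nat.choose_succ_succ]
        have habs : (a'' + 1 + M).choose (a''+1) * (a''+1) = (a'' + 1 + M).choose a'' * (M+1) := by
          have := Nat.choose_succ_right_eq (a'' + 1 + M) a''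
          have e7 : a'' + 1 + M - a'' = M + 1 := by omega
          rw [e7] at this; exact this
        have hB : (a'' + 1 + 1) * ((a'' + 1 + M).choose (a''+1)) =
            M * ((a'' + 1 + M).choose a'') + (a'' + 1 + 1 + M).choose (a''+1) := by
          rw [hPascal]
          zify; zify at habs; linear_combination habs
        rw [Nat.factorial_succ (a''+1)]
        zify
        zify at hC2 hB
        linear_combination ((a''+1).factorial * stirlingC M (K+1) : ℤ) * hB +
          ((a''+1).factorial * M * stirlingC M (K+2) : ℤ) * hC2

lemma sumBc (n k : ℕ) (hn : 1 ≤ n) :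
    ∀ d a, n + 1 ≤ a + d → ∑ b ∈ Finset.Ico a (n+1), Bc n b k = Sc n a k := by
  intro d
  induction d with
  | zero =>
    intro a ha
    rw [Finset.Ico_eq_empty (by omega : ¬ a < n + 1), Finset.sum_empty]
    unfold Sc
    rw [if_pos (by omega : n < a)]
  | succ d ih =>
    intro a ha
    rcases le_or_gt (n+1) a with h | h
    · rw [Finset.Ico_eq_empty (by omega : ¬ a < n + 1), Finset.sum_empty]
      unfold Sc
      rw [if_pos (by omega : n < a)]
    · rw [Finset.sum_eq_sum_Ico_succ_bot (by omega : a < n + 1), ih (a+1) (by omega),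
        ID1 n a k (by omega) hn]

lemma Sc_eq (n a K : ℕ) (hn : 1 ≤ n) (ha : a ≤ n) :
    Sc n a K = a.factorial * ((if a = 0 then 0 else (n-1).choose (a-1) * stirlingC (n-a) K)
        + (n-a) * n.choose a * stirlingC (n-a) (K+1)) := by
  rcases Nat.eq_zero_or_pos K with rfl | hK
  · unfold Sc
    rw [if_neg (by omega : ¬ n < a), if_pos rfl]
    rcases eq_or_lt_of_le ha with rfl | hlt
    · rw [Nat.sub_self, if_neg (by omega : ¬ a = 0)]
      have h1 : stirlingC 0 0 = 1 := rfl
      have h2 : stirlingC 0 1 = 0 := rfl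
      have h3 : a - 1 + 1 = a := by omega
      rw [h1, h2]
      have h4 : (a-1).choose (a-1) = 1 := Nat.choose_self _
      calc a.factorial = a.factorial * (1 * 1 + 0 * a.choose a * 0) := by ring
        _ = _ := by rw [h4]
    · obtain ⟨M, rfl⟩ : ∃ M, n = a + 1 + M := ⟨n - a - 1, by omega⟩
      have e2 : a + 1 + M - a = M + 1 := by omega
      rw [e2, stirlingC_zero, stirlingC_one]
      rcases Nat.eq_zero_or_pos a with rfl | hA
      · simp only [if_pos rfl, Nat.factorial_zero, Nat.choose_zero_right, Nat.zero_add, ite_self,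
          eq_self_iff_true, if_true]
        have : (1 + M).factorial = (M + 1) * M.factorial := by
          rw [show 1 + M = M + 1 by omega, Nat.factorial_succ]
        rw [this]
        ring_nf
      · rw [if_neg (by omega : ¬ a = 0)]
        have hc := Nat.choose_mul_factorial_mul_factorial (show a ≤ a + 1 + M by omega)
        rw [e2] at hc
        have : (M+1).factorial = (M+1) * M.factorial := Nat.factorial_succ M
        rw [this] at hc
        calc (a + 1 + M).factorial
            = (a + 1 + M).choose a * a.factorial * ((M+1) * M.factorial) := hc.symm
          _ = _ := by ring
  · unfold Sc
    rw [if_neg (by omega : ¬ n < a), if_neg (by omega : ¬ K = 0)]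

lemma ID2a (n a : ℕ) : Bc (n+1) a 0 = a * Bc n (a-1) 0 := by
  unfold Bc
  rw [if_pos rfl, if_pos rfl]
  rcases Nat.eq_zero_or_pos a with rfl | hA
  · rw [if_neg (by omega : ¬ (0:ℕ) = n + 1)]; ring
  · obtain ⟨a', rfl⟩ : ∃ a', a = a' + 1 := ⟨a - 1, by omega⟩
    rw [Nat.add_sub_cancel]
    by_cases h : a' = n
    · subst h
      rw [if_pos rfl, if_pos rfl, Nat.factorial_succ]
    · rw [if_neg (by omega : ¬ a' + 1 = n + 1), if_neg h]; ring

lemma Bc_k_big (n a k : ℕ) (h1 : 1 ≤ n) (h2 : n ≤ k) : Bc n a k = 0 := by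
  unfold Bc
  rw [if_neg (by omega : ¬ k = 0)]
  rcases le_or_gt n a with h | h
  · rw [if_pos h]
  · rw [if_neg (by omega : ¬ n ≤ a)]
    rw [stirlingC_eq_zero_of_lt (n-1-a) k (by omega)]
    rcases Nat.eq_zero_or_pos a with rfl | hA
    · rw [if_pos rfl]; ring
    · rw [if_neg (by omega : ¬ a = 0), stirlingC_eq_zero_of_lt (n-1-a) (k-1) (by omega)]
      ring

lemma ID2b (n a K : ℕ) (hn : K + 1 ≤ n) :
    Bc (n+1) a (K+1) = a * Bc n (a-1) (K+1) + Sc n a K := by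
  have hn1 : 1 ≤ n := by omega
  rcases le_or_gt a n with ha | ha
  · rw [Sc_eq n a K hn1 ha]
    unfold Bc
    rw [if_neg (by omega : ¬ K + 1 = 0), if_neg (by omega : ¬ n + 1 ≤ a)]
    have f1 : n + 1 - 1 = n := by omega
    have f2 : n + 1 - 1 - a = n - a := by omega
    have f3 : K + 1 - 1 = K := by omega
    rw [f1, f3]
    rcases Nat.eq_zero_or_pos a with rfl | hA
    · simp only [if_pos rfl, Nat.factorial_zero, Nat.choose_zero_right, Nat.sub_zero,
        Nat.zero_mul, Nat.zero_add, eq_self_iff_true, if_true]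
    · obtain ⟨c, rfl⟩ : ∃ c, a = c + 1 := ⟨a - 1, by omega⟩
      simp only [if_neg (by omega : ¬ c + 1 = 0), Nat.add_sub_cancel]
      rw [if_neg (by omega : ¬ K + 1 = 0), if_neg (by omega : ¬ n ≤ c)]
      have f4 : n - 1 - c = n - (c + 1) := by omega
      rw [f4]
      have hP2 : (n+1).choose (c+1) = n.choose c + n.choose (c+1) := Nat.choose_succ_succ n c
      rcases Nat.eq_zero_or_pos c with rfl | hC
      · simp only [Nat.zero_add, if_pos rfl, Nat.choose_zero_right, Nat.choose_one_right,
          eq_self_iff_true, if_true, Nat.factorial_one, Nat.factorial_zero]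
        ring
      · obtain ⟨c', rfl⟩ : ∃ c', c = c' + 1 := ⟨c - 1, by omega⟩
        simp only [if_neg (by omega : ¬ c' + 1 = 0), Nat.add_sub_cancel]
        obtain ⟨m, rfl⟩ : ∃ m, n = m + 1 := ⟨n - 1, by omega⟩
        have f5 : m + 1 - 1 = m := by omega
        rw [f5]
        have hP1 : (m+1).choose (c'+1) = m.choose c' + m.choose (c'+1) := Nat.choose_succ_succ m c'
        rw [Nat.factorial_succ (c'+1)]
        set w := m + 1 - (c' + 1 + 1) with hw
        zify
        zify at hP1 hP2
        linear_combination ((c'+1+1) * (c'+1).factorial * stirlingC w K : ℤ) * hP1 +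
          ((c'+1+1) * (c'+1).factorial * (w:ℤ) * (stirlingC w (K+1) : ℤ)) * hP2
  · unfold Bc Sc
    rw [if_neg (by omega : ¬ K + 1 = 0), if_pos (by omega : n + 1 ≤ a),
      if_neg (by omega : ¬ K + 1 = 0), if_pos (by omega : n ≤ a - 1),
      if_pos (by omega : n < a)]
    ring

lemma Bn_zero : ∀ n p a, n + 2 ≤ p → Bn n p a = 0 := by
  intro n
  induction n with
  | zero =>
    intro p a hp
    unfold Bn
    rw [if_neg (by omega : ¬ (p = 1 ∧ a = 0))]
  | succ n ih =>
    intro p a hp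
    unfold Bn
    rw [if_neg (by omega : ¬ p ≤ 1), ih (p-1) (a-1) (by omega),
      Finset.sum_eq_zero (fun b _ => ih p b (by omega))]
    ring

lemma Bn_one (n a : ℕ) (hn : 1 ≤ n) : Bn n 1 a = 0 := by
  obtain ⟨m, rfl⟩ : ∃ m, n = m + 1 := ⟨n - 1, by omega⟩
  unfold Bn
  rw [if_pos (le_refl 1)]

lemma CF : ∀ n, 1 ≤ n → ∀ p a k, p + k = n + 1 → 2 ≤ p → Bn n p a = Bc n a k := by
  intro n
  induction n with
  | zero => intro h; omega
  | succ n ih =>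
    intro _ p a k hpk hp
    rcases Nat.eq_zero_or_pos n with rfl | hn
    · -- n + 1 = 1 : p = 2, k = 0
      have hp2 : p = 2 := by omega
      have hk0 : k = 0 := by omega
      subst hp2; subst hk0
      unfold Bn Bc
      rw [if_neg (by omega : ¬ 2 ≤ 1), if_pos rfl]
      match a with
      | 0 =>
        rw [if_neg (by omega : ¬ (0:ℕ) = 0 + 1)]
        show 0 * Bn 0 (2-1) (0-1) + ∑ b ∈ Finset.Ico 0 (0+1), Bn 0 2 b = 0
        rw [Finset.sum_eq_zero (fun b _ => by unfold Bn; rw [if_neg (by omega : ¬ (2 = 1 ∧ b = 0))])]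
        ring
      | 1 =>
        rw [if_pos rfl]
        show 1 * Bn 0 1 0 + ∑ b ∈ Finset.Ico 1 1, Bn 0 2 b = 1
        rw [Finset.Ico_self, Finset.sum_empty]
        unfold Bn
        rw [if_pos ⟨rfl, rfl⟩]
        ring
      | (a+2) =>
        rw [if_neg (by omega : ¬ a + 2 = 0 + 1)]
        show (a+2) * Bn 0 (2-1) (a+2-1) + ∑ b ∈ Finset.Ico (a+2) (0+1), Bn 0 2 b = 0
        rw [Finset.Ico_eq_empty (by omega : ¬ a + 2 < 0 + 1), Finset.sum_empty]
        have : Bn 0 (2-1) (a+2-1) = 0 := by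
          unfold Bn; rw [if_neg (by omega : ¬ ((2:ℕ)-1 = 1 ∧ a + 2 - 1 = 0))]
        rw [this]
        ring
    · -- 1 ≤ n
      have hne : ¬ p ≤ 1 := by omega
      show (if p ≤ 1 then 0 else
        a * Bn n (p-1) (a-1) + ∑ b ∈ Finset.Ico a (n+1), Bn n p b) = Bc (n+1) a k
      rw [if_neg hne]
      rcases Nat.eq_zero_or_pos k with rfl | hk
      · -- k = 0, p = n + 2
        rw [Finset.sum_eq_zero (fun b _ => Bn_zero n p b (by omega)),
          ih hn (p-1) (a-1) 0 (by omega) (by omega), ID2a]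
        ring
      · obtain ⟨K, rfl⟩ : ∃ K, k = K + 1 := ⟨k - 1, by omega⟩
        have hsum : ∑ b ∈ Finset.Ico a (n+1), Bn n p b = Sc n a K := by
          rw [Finset.sum_congr rfl (fun b _ => ih hn p b K (by omega) hp)]
          exact sumBc n K hn (n+1) a (by omega)
        rw [hsum]
        have hterm : a * Bn n (p-1) (a-1) = a * Bc n (a-1) (K+1) := by
          rcases eq_or_lt_of_le hp with hp2 | hp3
        -- p = 2 or p ≥ 3
          · have hK : K + 1 = n := by omega
            rw [← hp2, Bn_one n (a-1) hn, Bc_k_big n (a-1) (K+1) hn (by omega)]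
          · rw [ih hn (p-1) (a-1) (K+1) (by omega) (by omega)]
        rw [hterm, ID2b n a K (by omega)]

lemma Bn_formula (n p : ℕ) (hn : 1 ≤ n) (hp : 2 ≤ p) :
    Bn n p 0 = (n-1) * stirlingC (n-1) (n+1-p) := by
  have hz : (n-1) * stirlingC (n-1) 0 = 0 := by
    rcases Nat.eq_zero_or_pos (n - 1) with h1 | h1
    · rw [h1]; ring
    · obtain ⟨m, hm⟩ : ∃ m, n - 1 = m + 1 := ⟨n - 2, by omega⟩
      rw [hm, stirlingC_zero]; ring
  rcases le_or_gt p (n+1) with h | h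
  · rw [CF n hn p 0 (n+1-p) (by omega) hp]
    rcases Nat.eq_zero_or_pos (n+1-p) with h0 | h0
    · rw [h0]
      unfold Bc
      rw [if_pos rfl, if_neg (by omega : ¬ (0:ℕ) = n), hz]
    · obtain ⟨K, hK⟩ : ∃ K, n + 1 - p = K + 1 := ⟨n - p, by omega⟩
      rw [hK]
      unfold Bc
      rw [if_neg (by omega : ¬ K + 1 = 0), if_neg (by omega : ¬ n ≤ 0)]
      simp only [if_pos rfl, eq_self_iff_true, if_true, Nat.sub_zero, Nat.factorial_zero,
        Nat.choose_zero_right, Nat.zero_add, Nat.one_mul]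
      ring
  · rw [Bn_zero n p 0 (by omega), show n + 1 - p = 0 by omega, hz]

lemma int_basis (a m : ℕ) (x : ℝ) :
    ∫ v in (0:ℝ)..x, (1-v)^a * v^m
      = ∑ j ∈ Finset.range (a+1),
          ((a.factorial : ℝ) * m.factorial / (j.factorial * (m+1+a-j).factorial))
            * ((1-x)^j * x^(m+1+a-j)) := by
  induction a generalizing m with
  | zero =>
    rw [Finset.sum_range_one]
    simp only [pow_zero, one_mul, Nat.factorial_zero, Nat.cast_one, Nat.add_zero, Nat.sub_zero]
    rw [integral_pow, Nat.factorial_succ, zero_pow (by omega : m + 1 ≠ 0)]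
    have hm : (m.factorial : ℝ) ≠ 0 := by positivity
    push_cast
    field_simp
    ring
  | succ a ih =>
    have h1 : ∫ v in (0:ℝ)..x, (1-v)^(a+1) * v^m
        = (∫ v in (0:ℝ)..x, (1-v)^a * v^m) - ∫ v in (0:ℝ)..x, (1-v)^a * v^(m+1) := by
      rw [← intervalIntegral.integral_sub]
      · apply intervalIntegral.integral_congr
        intro v _
        ring
      · exact ((continuous_const.sub continuous_id).pow a |>.mul (continuous_id.pow m)).intervalIntegrable 0 x
      · exact ((continuous_const.sub continuous_id).pow a |>.mul (continuous_id.pow (m+1))).intervalIntegrable 0 x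
    rw [h1, ih m, ih (m+1)]
    have step1 : ∑ j ∈ Finset.range (a+1),
          ((a.factorial : ℝ) * m.factorial / (j.factorial * (m+1+a-j).factorial))
            * ((1-x)^j * x^(m+1+a-j))
        = (∑ j ∈ Finset.range (a+1),
            ((a.factorial : ℝ) * m.factorial / (j.factorial * (m+1+a-j).factorial))
              * ((1-x)^j * x^(m+2+a-j)))
          + ∑ j ∈ Finset.range (a+1),
            ((a.factorial : ℝ) * m.factorial / (j.factorial * (m+1+a-j).factorial))
              * ((1-x)^(j+1) * x^(m+1+a-j)) := by
      rw [← Finset.sum_add_distrib]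
      apply Finset.sum_congr rfl
      intro j hj
      have hja : j ≤ a := by simpa [Nat.lt_succ_iff] using hj
      have he : m + 2 + a - j = (m + 1 + a - j) + 1 := by omega
      rw [he, pow_succ]
      ring
    rw [step1]
    have hA : ∑ j ∈ Finset.range (a+1),
          ((a.factorial : ℝ) * m.factorial / (j.factorial * (m+1+a-j).factorial))
            * ((1-x)^j * x^(m+2+a-j))
        = ∑ j ∈ Finset.range (a+2), (if j ≤ a then
            ((a.factorial : ℝ) * m.factorial / (j.factorial * (m+1+a-j).factorial))
              * ((1-x)^j * x^(m+2+a-j)) else 0) := by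
      symm
      rw [Finset.sum_range_succ, if_neg (by omega : ¬ a + 1 ≤ a), add_zero]
      exact Finset.sum_congr rfl fun j hj => by
        rw [if_pos (by simpa [Nat.lt_succ_iff] using hj)]
    have hB : ∑ j ∈ Finset.range (a+1),
          ((a.factorial : ℝ) * m.factorial / (j.factorial * (m+1+a-j).factorial))
            * ((1-x)^(j+1) * x^(m+1+a-j))
        = ∑ j ∈ Finset.range (a+2), (if 1 ≤ j then
            ((a.factorial : ℝ) * m.factorial / ((j-1).factorial * (m+2+a-j).factorial))
              * ((1-x)^j * x^(m+2+a-j)) else 0) := by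
      symm
      rw [Finset.sum_range_succ']
      rw [if_neg (by omega : ¬ (1:ℕ) ≤ 0), add_zero]
      apply Finset.sum_congr rfl
      intro j hj
      rw [if_pos (by omega : 1 ≤ j + 1)]
      have e1 : j + 1 - 1 = j := by omega
      have e2 : m + 2 + a - (j+1) = m + 1 + a - j := by omega
      rw [e1, e2]
    have hC : ∑ j ∈ Finset.range (a+1),
          ((a.factorial : ℝ) * (m+1).factorial / (j.factorial * ((m+1)+1+a-j).factorial))
            * ((1-x)^j * x^((m+1)+1+a-j))
        = ∑ j ∈ Finset.range (a+2), (if j ≤ a then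
            ((a.factorial : ℝ) * (m+1).factorial / (j.factorial * (m+2+a-j).factorial))
              * ((1-x)^j * x^(m+2+a-j)) else 0) := by
      symm
      rw [Finset.sum_range_succ, if_neg (by omega : ¬ a + 1 ≤ a), add_zero]
      apply Finset.sum_congr rfl
      intro j hj
      rw [if_pos (by simpa [Nat.lt_succ_iff] using hj)]
    rw [hA, hB, hC, ← Finset.sum_add_distrib, ← Finset.sum_sub_distrib]
    apply Finset.sum_congr rfl
    intro j hj
    have hj1 : j ≤ a + 1 := by simpa [Nat.lt_succ_iff] using hj
    have e3 : m + 1 + (a+1) - j = m + 2 + a - j := by omega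
    rw [e3]
    rcases Nat.eq_zero_or_pos j with rfl | hjpos
    · rw [if_pos (by omega : (0:ℕ) ≤ a), if_neg (by omega : ¬ (1:ℕ) ≤ 0),
        if_pos (by omega : (0:ℕ) ≤ a)]
      have e4 : m + 2 + a - 0 = (m + 1 + a) + 1 := by omega
      have e5 : m + 1 + a - 0 = m + 1 + a := by omega
      rw [e4, e5, Nat.factorial_succ (m+1+a), Nat.factorial_succ m, Nat.factorial_succ a]
      have h1 : ((m+1+a).factorial : ℝ) ≠ 0 := by positivity
      have h2 : (m.factorial : ℝ) ≠ 0 := by positivity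
      push_cast
      field_simp
      ring
    · rcases eq_or_lt_of_le hj1 with rfl | hja
      · rw [if_neg (by omega : ¬ a + 1 ≤ a), if_pos (by omega : 1 ≤ a + 1),
          if_neg (by omega : ¬ a + 1 ≤ a)]
        have e4 : a + 1 - 1 = a := by omega
        have e5 : m + 2 + a - (a+1) = m + 1 := by omega
        rw [e4, e5, Nat.factorial_succ a, Nat.factorial_succ m]
        have h1 : ((m+1).factorial : ℝ) ≠ 0 := by positivity
        have h2 : (a.factorial : ℝ) ≠ 0 := by positivity
        have h3 : (m.factorial : ℝ) ≠ 0 := by positivity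
        push_cast
        field_simp
        ring
      · have hja' : j ≤ a := by omega
        rw [if_pos hja', if_pos (by omega : 1 ≤ j), if_pos hja']
        obtain ⟨i, rfl⟩ : ∃ i, j = i + 1 := ⟨j - 1, by omega⟩
        obtain ⟨d, rfl⟩ : ∃ d, a = i + 1 + d := ⟨a - i - 1, by omega⟩
        have e4 : i + 1 - 1 = i := by omega
        have e5 : m + 2 + (i+1+d) - (i+1) = (m + 1 + d) + 1 := by omega
        have e6 : m + 1 + (i+1+d) - (i+1) = m + 1 + d := by omega
        rw [e4, e5, e6, Nat.factorial_succ (m+1+d), Nat.factorial_succ (i+1+d),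
          Nat.factorial_succ i, Nat.factorial_succ m]
        have h1 : ((m+1+d).factorial : ℝ) ≠ 0 := by positivity
        have h2 : (m.factorial : ℝ) ≠ 0 := by positivity
        have h3 : ((i+1+d).factorial : ℝ) ≠ 0 := by positivity
        have h4 : (i.factorial : ℝ) ≠ 0 := by positivity
        push_cast
        field_simp
        ring

lemma Q_eq (n p : ℕ) (x : ℝ) :
    Q n p x = ∑ a ∈ Finset.range (n+1),
      (Bn n p a : ℝ) / (a.factorial * (n-a).factorial) * ((1-x)^a * x^(n-a)) := by
  induction n generalizing p x with
  | zero =>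
    rw [Finset.sum_range_one]
    show (if p = 1 then (1:ℝ) else 0) = _
    by_cases h : p = 1
    · subst h
      rw [if_pos rfl]
      have : Bn 0 1 0 = 1 := by unfold Bn; rw [if_pos ⟨rfl, rfl⟩]
      rw [this]
      norm_num
    · rw [if_neg h]
      have : Bn 0 p 0 = 0 := by unfold Bn; rw [if_neg (by tauto)]
      rw [this]
      norm_num
  | succ n ih =>
    show (if p ≤ 1 then 0 else (1-x) * Q n (p-1) x + ∫ v in (0:ℝ)..x, Q n p v) = _
    by_cases hp : p ≤ 1
    · rw [if_pos hp]
      symm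
      apply Finset.sum_eq_zero
      intro a _
      have : Bn (n+1) p a = 0 := by unfold Bn; rw [if_pos hp]
      rw [this]
      norm_num
    · rw [if_neg hp]
      have hint : ∫ v in (0:ℝ)..x, Q n p v
          = ∑ a ∈ Finset.range (n+1), ∑ j ∈ Finset.range (a+1),
              (Bn n p a : ℝ) / (j.factorial * (n+1-j).factorial) * ((1-x)^j * x^(n+1-j)) := by
        rw [intervalIntegral.integral_congr (g := fun v => ∑ a ∈ Finset.range (n+1),
              (Bn n p a : ℝ) / (a.factorial * (n-a).factorial) * ((1-v)^a * v^(n-a)))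
            (fun v _ => ih p v)]
        rw [intervalIntegral.integral_finset_sum]
        · apply Finset.sum_congr rfl
          intro a ha
          have haan : a ≤ n := by simpa [Nat.lt_succ_iff] using ha
          rw [intervalIntegral.integral_const_mul, int_basis a (n-a) x, Finset.mul_sum]
          apply Finset.sum_congr rfl
          intro j hj
          have hji : j ≤ a := by simpa [Nat.lt_succ_iff] using hj
          have e1 : n - a + 1 + a - j = n + 1 - j := by omega
          rw [e1]
          have h1 : (a.factorial:ℝ) ≠ 0 := by positivity
          have h2 : ((n-a).factorial:ℝ) ≠ 0 := by positivity
          have h3 : (j.factorial:ℝ) ≠ 0 := by positivity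
          have h4 : ((n+1-j).factorial:ℝ) ≠ 0 := by positivity
          field_simp
        · intro a _
          apply Continuous.intervalIntegrable
          exact continuous_const.mul (((continuous_const.sub continuous_id).pow a).mul
            (continuous_id.pow (n-a)))
      rw [ih (p-1) x, hint]
      have hBdef : ∀ a, Bn (n+1) p a
          = a * Bn n (p-1) (a-1) + ∑ b ∈ Finset.Ico a (n+1), Bn n p b := by
        intro a
        show (if p ≤ 1 then (0:ℕ) else
          a * Bn n (p-1) (a-1) + ∑ b ∈ Finset.Ico a (n+1), Bn n p b) = _
        rw [if_neg hp]
      symm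
      calc ∑ a ∈ Finset.range (n+1+1),
            (Bn (n+1) p a : ℝ) / (a.factorial * (n+1-a).factorial) * ((1-x)^a * x^(n+1-a))
          = ∑ a ∈ Finset.range (n+2),
              ((a : ℝ) * (Bn n (p-1) (a-1) : ℝ) / (a.factorial * (n+1-a).factorial)
                  * ((1-x)^a * x^(n+1-a))
               + (∑ b ∈ Finset.Ico a (n+1), (Bn n p b : ℝ))
                  / (a.factorial * (n+1-a).factorial) * ((1-x)^a * x^(n+1-a))) := by
            apply Finset.sum_congr rfl
            intro a _
            rw [hBdef a]
            push_cast
            ring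
        _ = (∑ a ∈ Finset.range (n+2),
              (a : ℝ) * (Bn n (p-1) (a-1) : ℝ) / (a.factorial * (n+1-a).factorial)
                * ((1-x)^a * x^(n+1-a)))
            + ∑ a ∈ Finset.range (n+2),
              (∑ b ∈ Finset.Ico a (n+1), (Bn n p b : ℝ))
                / (a.factorial * (n+1-a).factorial) * ((1-x)^a * x^(n+1-a)) :=
            Finset.sum_add_distrib
        _ = (1-x) * (∑ a ∈ Finset.range (n+1),
              (Bn n (p-1) a : ℝ) / (a.factorial * (n-a).factorial) * ((1-x)^a * x^(n-a)))
            + ∑ a ∈ Finset.range (n+1), ∑ j ∈ Finset.range (a+1),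
              (Bn n p a : ℝ) / (j.factorial * (n+1-j).factorial) * ((1-x)^j * x^(n+1-j)) := by
            congr 1
            · -- first sums
              rw [Finset.sum_range_succ']
              have hz : ((0:ℕ) : ℝ) * (Bn n (p-1) (0-1) : ℝ)
                  / ((Nat.factorial 0 : ℝ) * ((n+1-0).factorial : ℝ)) * ((1-x)^0 * x^(n+1-0))
                  = 0 := by
                norm_num
              rw [hz, add_zero, Finset.mul_sum]
              apply Finset.sum_congr rfl
              intro a ha
              have haan : a ≤ n := by simpa [Nat.lt_succ_iff] using ha
              have e2 : a + 1 - 1 = a := by omega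
              have e3 : n + 1 - (a+1) = n - a := by omega
              rw [e2, e3, Nat.factorial_succ a]
              have h1 : (a.factorial:ℝ) ≠ 0 := by positivity
              have h2 : ((n-a).factorial:ℝ) ≠ 0 := by positivity
              have h3 : ((a:ℝ) + 1) ≠ 0 := by positivity
              push_cast
              field_simp
              ring
            · -- second sums : swap order
              symm
              have stepA : ∀ a ∈ Finset.range (n+1),
                  ∑ j ∈ Finset.range (a+1),
                    (Bn n p a : ℝ) / (j.factorial * (n+1-j).factorial) * ((1-x)^j * x^(n+1-j))
                  = ∑ j ∈ Finset.range (n+2), (if j ≤ a then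
                    (Bn n p a : ℝ) / (j.factorial * (n+1-j).factorial) * ((1-x)^j * x^(n+1-j))
                    else 0) := by
                intro a ha
                have haan : a ≤ n := by simpa [Nat.lt_succ_iff] using ha
                have h0 : ∑ j ∈ Finset.range (a+1),
                      (Bn n p a : ℝ) / (j.factorial * (n+1-j).factorial) * ((1-x)^j * x^(n+1-j))
                    = ∑ j ∈ Finset.range (a+1), (if j ≤ a then
                      (Bn n p a : ℝ) / (j.factorial * (n+1-j).factorial) * ((1-x)^j * x^(n+1-j))
                      else 0) :=
                  Finset.sum_congr rfl (fun j hj =>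
                    (if_pos (by simpa [Nat.lt_succ_iff] using hj)).symm)
                rw [h0]
                apply Finset.sum_subset
                · intro j hj
                  simp only [Finset.mem_range] at *
                  omega
                · intro j _ hj
                  rw [if_neg (by simp only [Finset.mem_range] at hj; omega)]
              rw [Finset.sum_congr rfl stepA, Finset.sum_comm]
              apply Finset.sum_congr rfl
              intro j _
              have stepC : ∑ a ∈ Finset.range (n+1), (if j ≤ a then
                    (Bn n p a : ℝ) / (j.factorial * (n+1-j).factorial) * ((1-x)^j * x^(n+1-j))
                    else 0)
                  = ∑ b ∈ Finset.Ico j (n+1),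
                    (Bn n p b : ℝ) / (j.factorial * (n+1-j).factorial) * ((1-x)^j * x^(n+1-j)) := by
                rw [Finset.range_eq_Ico]
                rw [← Finset.sum_subset (Finset.Ico_subset_Ico (by omega : 0 ≤ j) (le_refl (n+1)))
                  (fun b _ hb => by
                    rw [if_neg]
                    simp only [Finset.mem_Ico] at *
                    omega)]
                apply Finset.sum_congr rfl
                intro b hb
                rw [if_pos (by simp only [Finset.mem_Ico] at hb; omega)]
              rw [stepC, Finset.sum_div, Finset.sum_mul]

/-- For `p ≥ 2` and `n ≥ 1`, `Q_{n,p}(1) = (n − 1)·c(n − 1, n + 1 − p)/n!`. -/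
theorem Q_one_eq (n p : ℕ) (hp : 2 ≤ p) (hn : 1 ≤ n) :
    Q n p 1 = (((n - 1) * stirlingC (n - 1) (n + 1 - p) : ℕ) : ℝ) / (Nat.factorial n : ℝ) := by
  rw [Q_eq n p 1]
  have hmem : (0:ℕ) ∈ Finset.range (n+1) := Finset.mem_range.mpr (by omega)
  rw [Finset.sum_eq_single_of_mem 0 hmem (fun b _ hb => by
    obtain ⟨c, rfl⟩ : ∃ c, b = c + 1 := ⟨b - 1, by omega⟩
    rw [show (1:ℝ) - 1 = 0 by ring, zero_pow (by omega : c + 1 ≠ 0)]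
    ring)]
  rw [Bn_formula n p hn hp]
  rw [Nat.sub_zero]
  norm_num
end

section
/- For all real numbers u ∈ (0,1) and z ∈ [0,1), the double series ∑_{p≥1} ∑_{n≥0} Q_{n,p}(1)·u^p·z^n converges and equals u + (u²/(1−u))·(1 + (z−1)·(1−uz)^{−1/u}), where (1−uz)^{−1/u} denotes the real power exp(−(1/u)·log(1−uz)). -/
open MeasureTheory intervalIntegral

namespace QGenFunAux

open Finset Complex

lemma Q_cont (n p : ℕ) : Continuous (Q n p) := by
  induction n generalizing p with
  | zero => simp only [Q]; exact continuous_const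
  | succ n ih =>
    simp only [Q]
    split
    · exact continuous_const
    · exact ((continuous_const.sub continuous_id).mul (ih _)).add
        (intervalIntegral.continuous_primitive (fun a b => (ih p).intervalIntegrable a b) 0)

lemma Q_nonneg (n p : ℕ) {x : ℝ} (h0 : 0 ≤ x) (h1 : x ≤ 1) : 0 ≤ Q n p x := by
  induction n generalizing p x with
  | zero => simp only [Q]; split <;> norm_num
  | succ n ih =>
    simp only [Q]
    split
    · exact le_refl 0
    · have h2 : (0:ℝ) ≤ ∫ v in (0:ℝ)..x, Q n p v := by
        apply intervalIntegral.integral_nonneg h0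
        intro v hv
        exact ih p hv.1 (le_trans hv.2 h1)
      have h3 : 0 ≤ (1 - x) * Q n (p-1) x :=
        mul_nonneg (by linarith) (ih _ h0 h1)
      linarith

lemma Q_le_one (n p : ℕ) {x : ℝ} (h0 : 0 ≤ x) (h1 : x ≤ 1) : Q n p x ≤ 1 := by
  induction n generalizing p x with
  | zero => simp only [Q]; split <;> norm_num
  | succ n ih =>
    simp only [Q]
    split
    · norm_num
    · have h2 : (∫ v in (0:ℝ)..x, Q n p v) ≤ ∫ v in (0:ℝ)..x, (1:ℝ) := by
        apply intervalIntegral.integral_mono_on h0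
          ((Q_cont n p).intervalIntegrable _ _) intervalIntegrable_const
        intro v hv
        exact ih p hv.1 (le_trans hv.2 h1)
      simp only [intervalIntegral.integral_const, smul_eq_mul, mul_one, sub_zero] at h2
      have h3 : (1 - x) * Q n (p-1) x ≤ (1-x) * 1 :=
        mul_le_mul_of_nonneg_left (ih _ h0 h1) (by linarith)
      linarith

lemma parts_lemma (f : ℝ → ℝ) (hf : Continuous f) (k : ℕ) :
    ∫ v in (0:ℝ)..1, (1-v)^k * (∫ w in (0:ℝ)..v, f w)
      = (∫ w in (0:ℝ)..1, (1-w)^(k+1) * f w) / (k+1) := by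
  have hder : ∀ x ∈ Set.uIcc (0:ℝ) 1,
      HasDerivAt (fun y : ℝ => -((1-y)^(k+1)) / (k+1)) ((1-x)^k) x := by
    intro x _
    have h1 : HasDerivAt (fun y : ℝ => 1 - y) (-1) x := by
      simpa using (hasDerivAt_id x).const_sub 1
    have h2 := (h1.pow (k+1)).neg.div_const ((k:ℝ)+1)
    refine h2.congr_deriv (Eq.symm ?_)
    have : ((k:ℝ)+1) ≠ 0 := by positivity
    field_simp
    simp only [Nat.add_sub_cancel]; push_cast; ring
  have hF : ∀ x ∈ Set.uIcc (0:ℝ) 1,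
      HasDerivAt (fun y : ℝ => ∫ w in (0:ℝ)..y, f w) (f x) x := by
    intro x _
    exact intervalIntegral.integral_hasDerivAt_right (hf.intervalIntegrable _ _)
      (hf.stronglyMeasurableAtFilter _ _) hf.continuousAt
  have := intervalIntegral.integral_mul_deriv_eq_deriv_mul hder hF
    (((continuous_const.sub continuous_id).pow k).intervalIntegrable _ _)
    (hf.intervalIntegrable _ _)
  have e1 : ∫ x in (0:ℝ)..1, -(1-x)^(k+1)/(k+1) * f x
      = (-(1/((k:ℝ)+1))) * ∫ x in (0:ℝ)..1, (1-x)^(k+1)*f x := by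
    rw [← intervalIntegral.integral_const_mul]
    apply intervalIntegral.integral_congr
    intro x _
    ring
  rw [e1] at this
  norm_num at this
  have hk : ((k:ℝ)+1) ≠ 0 := by positivity
  field_simp at this ⊢
  linarith

noncomputable def U (n p k : ℕ) : ℝ := ∫ v in (0:ℝ)..1, (1-v)^k * Q n p v

lemma U_zero_one (k : ℕ) : U 0 1 k = 1/(k+1) := by
  simp only [U, Q]
  norm_num
  rw [intervalIntegral.integral_comp_sub_left (fun v => v^k) 1]
  simp [integral_pow]

lemma U_zero_ge (p k : ℕ) (hp : p ≠ 1) : U 0 p k = 0 := by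
  simp only [U, Q, if_neg hp]
  simp

lemma U_one_eq_zero (n k : ℕ) : U (n+1) 1 k = 0 := by
  simp only [U, Q]
  simp

lemma U_rec (n p k : ℕ) (hp : 2 ≤ p) :
    U (n+1) p k = U n (p-1) (k+1) + U n p (k+1) / ((k:ℝ)+1) := by
  have hfun : (fun v : ℝ => (1-v)^k * Q (n+1) p v)
      = fun v => (1-v)^(k+1) * Q n (p-1) v + (1-v)^k * (∫ w in (0:ℝ)..v, Q n p w) := by
    funext v
    simp only [Q, if_neg (by omega : ¬ p ≤ 1)]
    ring
  have hc1 : Continuous fun v : ℝ => (1-v)^(k+1) * Q n (p-1) v :=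
    ((continuous_const.sub continuous_id).pow _).mul (Q_cont _ _)
  have hc2 : Continuous fun v : ℝ => (1-v)^k * (∫ w in (0:ℝ)..v, Q n p w) :=
    ((continuous_const.sub continuous_id).pow _).mul
      (intervalIntegral.continuous_primitive (fun a b => (Q_cont n p).intervalIntegrable a b) 0)
  have : U (n+1) p k = (∫ v in (0:ℝ)..1, (1-v)^(k+1) * Q n (p-1) v)
      + ∫ v in (0:ℝ)..1, (1-v)^k * (∫ w in (0:ℝ)..v, Q n p w) := by
    rw [U, hfun, intervalIntegral.integral_add (hc1.intervalIntegrable _ _)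
      (hc2.intervalIntegrable _ _)]
  rw [this, parts_lemma _ (Q_cont n p) k]
  rfl

noncomputable def E : ℕ → ℕ → ℤ → ℝ
  | _, 0, m => if m = 0 then 1 else 0
  | k, n+1, m => E (k+1) n m + E (k+1) n (m-1) / (k+1)

lemma E_neg (k n : ℕ) (m : ℤ) (h : m < 0) : E k n m = 0 := by
  induction n generalizing k m with
  | zero => simp only [E]; rw [if_neg (by omega)]
  | succ n ih => simp only [E]; rw [ih _ _ h, ih _ _ (by omega)]; simp

lemma E_big (k n : ℕ) (m : ℤ) (h : (n:ℤ) < m) : E k n m = 0 := by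
  induction n generalizing k m with
  | zero => simp only [E]; rw [if_neg (by omega)]
  | succ n ih => simp only [E]; rw [ih _ _ (by omega), ih _ _ (by omega)]; simp

lemma E_poly (u : ℝ) (n k : ℕ) :
    ∑ i ∈ range (n+1), E k n ((n:ℤ) - i) * u^i = ∏ j ∈ range n, (u + 1/(k+j+1)) := by
  induction n generalizing k with
  | zero => simp [E]
  | succ n ih =>
    set P := ∑ i ∈ range (n+1), E (k+1) n ((n:ℤ)-i) * u^i with hP
    have hr : ∏ j ∈ range (n+1), (u + 1/((k:ℝ)+j+1)) = (u + 1/((k:ℝ)+1)) * P := by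
      rw [prod_range_succ', hP, ih (k+1)]
      have : ∏ j ∈ range n, (u + 1/((k:ℝ)+(j+1)+1)) = ∏ j ∈ range n, (u + 1/(((k:ℕ)+1:ℕ)+j+1)) := by
        apply prod_congr rfl; intro j _; push_cast; ring_nf
      rw [← this]
      push_cast
      ring
    rw [hr]
    have expand : ∑ i ∈ range (n+2), E k (n+1) ((n:ℤ)+1 - i) * u^i
        = (∑ i ∈ range (n+2), E (k+1) n ((n:ℤ)+1-i) * u^i)
          + (∑ i ∈ range (n+2), E (k+1) n ((n:ℤ)-i) * u^i) / ((k:ℝ)+1) := by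
      rw [Finset.sum_div, ← Finset.sum_add_distrib]
      apply Finset.sum_congr rfl
      intro i _
      show (E (k+1) n ((n:ℤ)+1-i) + E (k+1) n ((n:ℤ)+1-i-1) / ((k:ℝ)+1)) * u^i = _
      have h2 : (n:ℤ)+1-i-1 = (n:ℤ)-i := by ring
      rw [h2]
      ring
    have hA : ∑ i ∈ range (n+2), E (k+1) n ((n:ℤ)+1-i) * u^i = u * P := by
      rw [sum_range_succ']
      have h0 : E (k+1) n ((n:ℤ)+1-(0:ℕ)) * u^0 = 0 := by
        rw [E_big _ _ _ (by push_cast; omega)]; simp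
      rw [h0, add_zero, hP, Finset.mul_sum]
      apply Finset.sum_congr rfl
      intro i _
      have h2 : (n:ℤ)+1-((i:ℕ)+1:ℕ) = (n:ℤ)-i := by push_cast; ring
      rw [h2]
      ring
    have hB : ∑ i ∈ range (n+2), E (k+1) n ((n:ℤ)-i) * u^i = P := by
      rw [sum_range_succ, hP]
      have h0 : E (k+1) n ((n:ℤ)-((n:ℕ)+1:ℕ)) = 0 := E_neg _ _ _ (by push_cast; omega)
      rw [h0]
      simp
    have hgoal : ∑ i ∈ range (n+1+1), E k (n+1) (((n:ℕ)+1:ℕ) - (i:ℕ)) * u^i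
        = ∑ i ∈ range (n+2), E k (n+1) ((n:ℤ)+1 - i) * u^i := by
      apply Finset.sum_congr rfl
      intro i _
      norm_num
    rw [hgoal, expand, hA, hB]
    ring

lemma U_closed (n : ℕ) : ∀ k p, U (n+1) (p+2) k = E k n ((n:ℤ) - p) / ((k:ℝ)+n+2) := by
  induction n with
  | zero =>
    intro k p
    rw [U_rec _ _ _ (by omega)]
    match p with
    | 0 =>
      show U 0 1 (k+1) + U 0 2 (k+1) / _ = _
      rw [U_zero_one, U_zero_ge 2 _ (by omega)]
      simp only [E]
      norm_num
      push_cast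
      ring
    | p'+1 =>
      show U 0 (p'+2) (k+1) + U 0 (p'+3) (k+1) / _ = _
      rw [U_zero_ge _ _ (by omega), U_zero_ge _ _ (by omega)]
      simp only [E]
      rw [if_neg (by omega)]
      norm_num
  | succ n ih =>
    intro k p
    rw [U_rec _ _ _ (by omega)]
    have hk1 : ((k:ℝ)+1) ≠ 0 := by positivity
    have hkn : ((k:ℝ)+1+(n:ℝ)+2) ≠ 0 := by positivity
    match p with
    | 0 =>
      show U (n+1) 1 (k+1) + U (n+1) 2 (k+1) / _ = _
      rw [U_one_eq_zero, ih (k+1) 0]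
      simp only [E]
      push_cast
      rw [E_big (k+1) n ((n:ℤ)+1-0) (by omega)]
      push_cast
      ring_nf
    | p'+1 =>
      show U (n+1) (p'+2) (k+1) + U (n+1) (p'+3) (k+1) / _ = _
      rw [ih (k+1) p', ih (k+1) (p'+1)]
      simp only [E]
      push_cast
      ring_nf

lemma Q_succ_one (n p : ℕ) (hp : 2 ≤ p) : Q (n+1) p 1 = U n p 0 := by
  simp only [Q, if_neg (by omega : ¬ p ≤ 1)]
  rw [U]
  have : (fun v : ℝ => (1-v)^0 * Q n p v) = fun v => Q n p v := by
    funext v; ring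
  rw [this]
  ring

section g

variable {u : ℝ}

noncomputable def g (u : ℝ) (c : ℂ) (w : ℂ) : ℂ := Complex.exp (c * Complex.log (1 - u * w))

lemma slit_mem (hu0 : 0 < u) {w : ℂ} (hw : w ∈ Metric.ball (0:ℂ) (1/u)) :
    (1 - (u:ℂ) * w) ∈ Complex.slitPlane := by
  rw [Complex.mem_slitPlane_iff]
  left
  have habs : ‖(u:ℂ) * w‖ < 1 := by
    rw [norm_mul, Complex.norm_real, Real.norm_eq_abs, abs_of_pos hu0]
    have : ‖w‖ < 1/u := by simpa [Metric.mem_ball, Complex.dist_eq] using hw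
    calc u * ‖w‖ < u * (1/u) := by exact mul_lt_mul_of_pos_left this hu0
    _ = 1 := by field_simp
  have hre : ((u:ℂ) * w).re ≤ ‖(u:ℂ)*w‖ := Complex.re_le_norm _
  simp only [Complex.sub_re, Complex.one_re]
  linarith

lemma g_hasDerivAt (hu0 : 0 < u) (c : ℂ) {w : ℂ}
    (hw : w ∈ Metric.ball (0:ℂ) (1/u)) :
    HasDerivAt (g u c) ((-u * c) * g u (c-1) w) w := by
  have hslit := slit_mem hu0 hw
  have hne : (1 - (u:ℂ)*w) ≠ 0 := Complex.slitPlane_ne_zero hslit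
  have h1 : HasDerivAt (fun w : ℂ => 1 - (u:ℂ)*w) (-(u:ℂ)) w := by
    simpa using ((hasDerivAt_id w).const_mul (u:ℂ)).const_sub 1
  have h2 : HasDerivAt (fun w : ℂ => Complex.log (1 - u*w)) ((1-(u:ℂ)*w)⁻¹ * -(u:ℂ)) w :=
    by have := (Complex.hasDerivAt_log hslit).comp w h1; exact this
  have h3 : HasDerivAt (fun w : ℂ => c * Complex.log (1 - u*w))
      (c * ((1-(u:ℂ)*w)⁻¹ * -(u:ℂ))) w := h2.const_mul c
  have h4 := h3.cexp
  refine HasDerivAt.congr_deriv h4 (Eq.symm ?_)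
  show (-u * c) * g u (c-1) w = _
  unfold g
  rw [sub_one_mul, Complex.exp_sub, Complex.exp_log hne, div_eq_mul_inv]
  ring

lemma g_iteratedDeriv (hu0 : 0 < u) (c : ℂ) (m : ℕ) :
    ∀ w ∈ Metric.ball (0:ℂ) (1/u),
      iteratedDeriv m (g u c) w = (∏ j ∈ range m, (-u * (c - j))) * g u (c - m) w := by
  induction m with
  | zero => intro w _; simp
  | succ m ih =>
    intro w hw
    rw [iteratedDeriv_succ]
    have hEq : (fun w' => iteratedDeriv m (g u c) w') =ᶠ[nhds w]
        (fun w' => (∏ j ∈ range m, (-u * (c - j))) * g u (c - m) w') := by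
      filter_upwards [Metric.isOpen_ball.mem_nhds hw] with w' hw'
      exact ih w' hw'
    rw [hEq.deriv_eq]
    have hd := ((g_hasDerivAt hu0 (c - m) hw).const_mul
      (∏ j ∈ range m, (-u * (c - j)))).deriv
    rw [hd, prod_range_succ]
    push_cast
    have harg : c - (m:ℂ) - 1 = c - ((m:ℂ) + 1) := by ring
    rw [harg]
    ring

lemma binom_hasSum (hu0 : 0 < u) (hu1 : u < 1) {z : ℝ} (hz0 : 0 ≤ z) (hz1 : z < 1) :
    HasSum (fun m : ℕ => (∏ j ∈ range m, (1 + (j:ℝ)*u)) / (Nat.factorial m) * z^m)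
      (Real.exp (-(1/u) * Real.log (1 - u*z))) := by
  set c : ℂ := ((-(1/u) : ℝ) : ℂ) with hc
  have hub : (0:ℝ) < 1/u := by positivity
  have h1u : (1:ℝ) < 1/u := by
    rw [lt_div_iff₀ hu0]; linarith
  have hdiff : DifferentiableOn ℂ (g u c) (Metric.ball 0 (1/u)) := fun w hw =>
    ((g_hasDerivAt hu0 c hw).differentiableAt).differentiableWithinAt
  have hzball : (z:ℂ) ∈ Metric.ball (0:ℂ) (1/u) := by
    simp only [Metric.mem_ball, Complex.dist_eq, sub_zero, Complex.norm_real, Real.norm_eq_abs]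
    rw [_root_.abs_of_nonneg hz0]; linarith
  have H := Complex.hasSum_taylorSeries_on_ball hdiff hzball
  have h0ball : (0:ℂ) ∈ Metric.ball (0:ℂ) (1/u) := by
    simp only [Metric.mem_ball, dist_self]
    exact hub
  have hg0 : ∀ c' : ℂ, g u c' 0 = 1 := by
    intro c'; unfold g; simp
  have hit : ∀ m : ℕ, iteratedDeriv m (g u c) 0 = ((∏ j ∈ range m, (1 + (j:ℝ)*u) : ℝ) : ℂ) := by
    intro m
    rw [g_iteratedDeriv hu0 c m 0 h0ball, hg0, mul_one]
    push_cast
    apply Finset.prod_congr rfl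
    intro j _
    have hune : (u:ℂ) ≠ 0 := by
      simpa using ne_of_gt hu0
    rw [hc]
    push_cast
    field_simp
    ring
  have hfz : g u c z = ((Real.exp (-(1/u) * Real.log (1 - u*z)) : ℝ) : ℂ) := by
    unfold g
    have h1 : (1:ℂ) - (u:ℂ)*(z:ℂ) = ((1 - u*z : ℝ) : ℂ) := by push_cast; ring
    have h2 : (0:ℝ) < 1 - u*z := by nlinarith
    rw [h1, ← Complex.ofReal_log h2.le, hc]
    rw [← Complex.ofReal_mul, Complex.ofReal_exp]
  rw [hfz] at H
  have H2 : HasSum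
      (fun m : ℕ => (((∏ j ∈ range m, (1 + (j:ℝ)*u)) / (Nat.factorial m) * z^m : ℝ)  : ℂ))
      ((Real.exp (-(1/u) * Real.log (1 - u*z)) : ℝ) : ℂ) := by
    convert H using 1
    · rfl
    funext m
    rw [hit m]
    push_cast
    rw [smul_eq_mul, smul_eq_mul]
    ring
  exact_mod_cast H2

end g


section assemble

variable (u z : ℝ)

noncomputable def bb (m : ℕ) : ℝ := (∏ j ∈ range m, (1 + (j:ℝ)*u)) / (Nat.factorial m)

noncomputable def cfun : ℕ → ℝ
  | 0 => u
  | n+1 => u^2/(1-u) * (bb u n - bb u (n+1)) * z^(n+1)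

lemma bb_succ (m : ℕ) : bb u (m+1) = bb u m * (1+(m:ℝ)*u)/((m:ℝ)+1) := by
  unfold bb
  rw [prod_range_succ, Nat.factorial_succ]
  have h1 : ((Nat.factorial m : ℝ)) ≠ 0 := by positivity
  have h2 : ((m:ℝ)+1) ≠ 0 := by positivity
  push_cast
  rw [div_mul_eq_mul_div, div_div, mul_comm ((m:ℝ)+1) ((Nat.factorial m : ℝ))]

lemma prod_shift (N : ℕ) :
    ∏ j ∈ range N, (u + 1/((j:ℝ)+1)) = ((N:ℝ)+1) * bb u (N+1) := by
  have h2 : ∀ M : ℕ, ∏ j ∈ range M, ((j:ℝ)+1) = (Nat.factorial M : ℝ) := by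
    intro M
    induction M with
    | zero => simp
    | succ n ih => rw [prod_range_succ, ih, Nat.factorial_succ]; push_cast; ring
  have h1 : ∀ j ∈ range N, (u + 1/((j:ℝ)+1)) = (1+((j:ℝ)+1)*u) / ((j:ℝ)+1) := by
    intro j _
    have : ((j:ℝ)+1) ≠ 0 := by positivity
    field_simp
    ring
  rw [prod_congr rfl h1, prod_div_distrib]
  have h3 : ∏ j ∈ range N, (1+((j:ℝ)+1)*u) = ∏ j ∈ range (N+1), (1+(j:ℝ)*u) := by
    rw [prod_range_succ']
    norm_num
  rw [h2 N, h3]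
  unfold bb
  have h4 : ((Nat.factorial N : ℝ)) ≠ 0 := by positivity
  have h5 : ((Nat.factorial (N+1) : ℝ)) ≠ 0 := by positivity
  rw [Nat.factorial_succ]
  push_cast
  field_simp
  ring_nf
  exact prod_congr rfl (fun x _ => by ring)

lemma Q_one_player (n : ℕ) (x : ℝ) : Q (n+1) 1 x = 0 := by
  simp [Q]

variable {u z : ℝ} (hu0 : 0 < u) (hu1 : u < 1) (hz0 : 0 ≤ z) (hz1 : z < 1)

lemma fiber0 : HasSum (fun j : ℕ => Q 0 (j+1) 1 * u^(j+1) * z^0) (cfun u z 0) := by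
  have h := hasSum_single (f := fun j : ℕ => Q 0 (j+1) 1 * u^(j+1) * z^0) 0 ?_
  · convert h using 1
    show u = _
    simp [Q]
  · intro j hj
    show Q 0 (j+1) 1 * u^(j+1) * z^0 = 0
    have : Q 0 (j+1) 1 = 0 := by
      simp only [Q]
      rw [if_neg (by omega)]
    rw [this]
    ring

lemma fiber1 : HasSum (fun j : ℕ => Q 1 (j+1) 1 * u^(j+1) * z^1) (cfun u z 1) := by
  have hz : ∀ j : ℕ, Q 1 (j+1) 1 * u^(j+1) * z^1 = 0 := by
    intro j
    match j with
    | 0 => rw [Q_one_player]; ring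
    | i+1 =>
      rw [Q_succ_one _ _ (by omega), U_zero_ge _ _ (by omega)]
      ring
  have : cfun u z 1 = 0 := by
    show u^2/(1-u) * (bb u 0 - bb u 1) * z^1 = 0
    have : bb u 1 = bb u 0 := by unfold bb; simp
    rw [this]
    ring
  rw [this]
  convert hasSum_zero with j
  exact hz j

include hu0 hu1 in
lemma fiberN (N : ℕ) :
    HasSum (fun j : ℕ => Q (N+2) (j+1) 1 * u^(j+1) * z^(N+2)) (cfun u z (N+2)) := by
  have hval : ∀ i : ℕ, Q (N+2) (i+2) 1 = E 0 N ((N:ℤ)-i) / ((N:ℝ)+2) := by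
    intro i
    rw [Q_succ_one _ _ (by omega), U_closed N 0 i]
    norm_num
  have h := hasSum_sum_of_ne_finset_zero
    (f := fun j : ℕ => Q (N+2) (j+1) 1 * u^(j+1) * z^(N+2)) (s := range (N+2)) (L := SummationFilter.unconditional ℕ) ?_
  swap
  · intro j hj
    simp only [mem_range, not_lt] at hj
    obtain ⟨i, rfl⟩ : ∃ i, j = i+1 := ⟨j-1, by omega⟩
    show Q (N+2) (i+1+1) 1 * u^(i+1+1) * z^(N+2) = 0
    rw [hval i, E_neg _ _ _ (by push_cast; omega)]
    ring
  convert h using 1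
  rw [sum_range_succ']
  rw [Q_one_player]
  have hsum : ∑ i ∈ range (N+1), Q (N+2) (i+1+1) 1 * u^(i+1+1) * z^(N+2)
      = (z^(N+2) * u^2 / ((N:ℝ)+2)) * ∑ i ∈ range (N+1), E 0 N ((N:ℤ)-i) * u^i := by
    rw [Finset.mul_sum]
    apply Finset.sum_congr rfl
    intro i _
    rw [hval i]
    ring
  have hpoly : ∑ i ∈ range (N+1), E 0 N ((N:ℤ)-i) * u^i
      = ∏ j ∈ range N, (u + 1/((j:ℝ)+1)) := by
    rw [E_poly u N 0]
    apply prod_congr rfl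
    intro j _
    norm_num
  rw [hsum, hpoly, prod_shift]
  show u^2/(1-u) * (bb u (N+1) - bb u (N+2)) * z^(N+2) = _
  rw [bb_succ u (N+1)]
  have h1 : (1:ℝ) - u ≠ 0 := by linarith
  have h2 : ((N:ℝ)+1+1) ≠ 0 := by positivity
  push_cast
  field_simp
  ring

include hu0 hu1 hz0 hz1 in
lemma hasSum_cfun :
    HasSum (cfun u z)
      (u + u ^ 2 / (1 - u) * (1 + (z - 1) * Real.exp (-(1 / u) * Real.log (1 - u * z)))) := by
  set B := Real.exp (-(1 / u) * Real.log (1 - u * z)) with hB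
  set K := u^2/(1-u) with hK
  have hbs : HasSum (fun m : ℕ => bb u m * z^m) B := by
    exact binom_hasSum hu0 hu1 hz0 hz1
  have h2 : HasSum (fun m : ℕ => (K*z) * (bb u m * z^m)) (K*z*B) := hbs.mul_left _
  have h3 : HasSum (fun m : ℕ => bb u (m+1) * z^(m+1)) (B - 1) := by
    apply (hasSum_nat_add_iff (f := fun m : ℕ => bb u m * z^m) 1).mpr
    have : B - 1 + ∑ i ∈ range 1, bb u i * z^i = B := by
      have : bb u 0 = 1 := by unfold bb; simp
      simp [this]
    rw [this]
    exact hbs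
  have h4 := h2.sub (h3.mul_left K)
  have h5 : (fun m : ℕ => (K*z) * (bb u m * z^m) - K * (bb u (m+1) * z^(m+1)))
      = fun m : ℕ => cfun u z (m+1) := by
    funext m
    show _ = K * (bb u m - bb u (m+1)) * z^(m+1)
    ring
  rw [h5] at h4
  have h6 := (hasSum_nat_add_iff (f := cfun u z) 1).mp h4
  have : K*z*B - K*(B-1) + ∑ i ∈ range 1, cfun u z i = u + K * (1 + (z-1)*B) := by
    have hc0 : cfun u z 0 = u := rfl
    rw [Finset.sum_range_one, hc0]
    ring
  rwa [this] at h6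

end assemble

end QGenFunAux

open QGenFunAux

/-- For `u ∈ (0,1)` and `z ∈ [0,1)`, the double series `∑_{p≥1} ∑_{n≥0} Q_{n,p}(1) u^p z^n`
converges, with sum `u + (u²/(1−u))·(1 + (z−1)·(1−uz)^{−1/u})`, where `(1−uz)^{−1/u}`
denotes the real power `exp(−(1/u)·log(1−uz))`. -/
theorem Q_genFun (u z : ℝ) (hu : u ∈ Set.Ioo (0:ℝ) 1) (hz : z ∈ Set.Ico (0:ℝ) 1) :
    HasSum (fun q : ℕ × ℕ => Q q.2 (q.1 + 1) 1 * u ^ (q.1 + 1) * z ^ q.2)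
      (u + u ^ 2 / (1 - u) * (1 + (z - 1) * Real.exp (-(1 / u) * Real.log (1 - u * z)))) := by
  obtain ⟨hu0, hu1⟩ := hu
  obtain ⟨hz0, hz1⟩ := hz
  set f : ℕ × ℕ → ℝ := fun q => Q q.2 (q.1+1) 1 * u^(q.1+1) * z^q.2 with hf
  have hnn : ∀ q : ℕ×ℕ, 0 ≤ f q := fun q =>
    mul_nonneg (mul_nonneg (Q_nonneg _ _ zero_le_one le_rfl) (pow_nonneg hu0.le _))
      (pow_nonneg hz0 _)
  have hfib : ∀ n : ℕ, HasSum (fun p' : ℕ => f (p', n)) (QGenFunAux.cfun u z n) := by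
    intro n
    match n with
    | 0 => exact QGenFunAux.fiber0
    | 1 => exact QGenFunAux.fiber1
    | N+2 => exact QGenFunAux.fiberN hu0 hu1 N
  have hsum : Summable f := by
    rw [summable_prod_of_nonneg hnn]
    constructor
    · intro p'
      apply Summable.of_nonneg_of_le (fun n => hnn (p', n)) (fun n => ?_)
        (summable_geometric_of_lt_one hz0 hz1)
      show Q n (p'+1) 1 * u^(p'+1) * z^n ≤ z^n
      have h1 : Q n (p'+1) 1 ≤ 1 := Q_le_one _ _ zero_le_one le_rfl
      have h2 : u^(p'+1) ≤ 1 := pow_le_one₀ hu0.le hu1.le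
      have h3 : 0 ≤ z^n := pow_nonneg hz0 n
      have h4 : 0 ≤ Q n (p'+1) 1 := Q_nonneg _ _ zero_le_one le_rfl
      have h5 : 0 ≤ u^(p'+1) := pow_nonneg hu0.le _
      exact mul_le_of_le_one_left h3 (mul_le_one₀ h1 h5 h2)
    · apply Summable.of_nonneg_of_le (fun p' => tsum_nonneg (fun n => hnn (p',n)))
        (fun p' => ?_) (((summable_geometric_of_lt_one hu0.le hu1).mul_left ((1-z)⁻¹ * u)))
      have hb : ∀ n : ℕ, f (p', n) ≤ u^(p'+1) * z^n := by
        intro n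
        show Q n (p'+1) 1 * u^(p'+1) * z^n ≤ u^(p'+1) * z^n
        have h1 : Q n (p'+1) 1 ≤ 1 := Q_le_one _ _ zero_le_one le_rfl
        have h3 : 0 ≤ z^n := pow_nonneg hz0 n
        have h4 : 0 ≤ Q n (p'+1) 1 := Q_nonneg _ _ zero_le_one le_rfl
        have h5 : 0 ≤ u^(p'+1) := pow_nonneg hu0.le _
        exact mul_le_mul_of_nonneg_right (mul_le_of_le_one_left h5 h1) h3
      have hs2 : Summable (fun n : ℕ => u^(p'+1) * z^n) :=
        (summable_geometric_of_lt_one hz0 hz1).mul_left _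
      calc ∑' n, f (p', n) ≤ ∑' n, u^(p'+1) * z^n := by
            apply Summable.tsum_le_tsum hb ?_ hs2
            apply Summable.of_nonneg_of_le (fun n => hnn (p', n)) hb hs2
        _ = u^(p'+1) * (1-z)⁻¹ := by
            rw [tsum_mul_left, tsum_geometric_of_lt_one hz0 hz1]
        _ = (1-z)⁻¹ * u * u^p' := by ring
  have hhs := hsum.hasSum
  have hswap : HasSum (fun q : ℕ×ℕ => f (q.2, q.1)) (∑' q, f q) :=
    ((Equiv.prodComm ℕ ℕ).hasSum_iff).mpr hhs
  have hg : HasSum (QGenFunAux.cfun u z) (∑' q, f q) := hswap.prod_fiberwise hfib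
  have hc := QGenFunAux.hasSum_cfun hu0 hu1 hz0 hz1
  have heq : ∑' q, f q
      = u + u ^ 2 / (1 - u) * (1 + (z - 1) * Real.exp (-(1 / u) * Real.log (1 - u * z))) :=
    hg.unique hc
  rw [← heq]
  exact hhs
end

section
/- For all real numbers x ∈ [0,1], u ∈ (0,1) and z ∈ [0,1), the double series ∑_{p≥1} ∑_{n≥0} Q_{n,p}(x)·u^p·z^n converges and equals u/(1−u) + (u/(1−uz) − u/(1−u))·((1−uz)/(1−(1−x)uz))^{1−1/u}, where the power denotes the real power of the positive base (1−uz)/(1−(1−x)uz). -/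
open MeasureTheory intervalIntegral

lemma Q_cont (n p : ℕ) : Continuous (Q n p) := by
  induction n generalizing p with
  | zero => simp only [Q]; exact continuous_const
  | succ n ih =>
    simp only [Q]
    split
    · exact continuous_const
    · exact (((continuous_const.sub continuous_id).mul (ih (p-1)))).add
        (intervalIntegral.continuous_primitive (fun a b => (ih p).intervalIntegrable a b) 0)

lemma Q_nonneg (n p : ℕ) {x : ℝ} (hx : x ∈ Set.Icc (0:ℝ) 1) : 0 ≤ Q n p x := by
  induction n generalizing p x with
  | zero => simp only [Q]; split <;> norm_num
  | succ n ih =>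
    simp only [Q]
    split
    · exact le_refl 0
    · refine add_nonneg (mul_nonneg (by linarith [hx.2]) (ih _ hx)) ?_
      refine intervalIntegral.integral_nonneg hx.1 (fun v hv => ih _ ?_)
      exact ⟨hv.1, hv.2.trans hx.2⟩

lemma Q_le_one (n p : ℕ) {x : ℝ} (hx : x ∈ Set.Icc (0:ℝ) 1) : Q n p x ≤ 1 := by
  induction n generalizing p x with
  | zero => simp only [Q]; split <;> norm_num
  | succ n ih =>
    simp only [Q]
    split
    · norm_num
    · have h1 : (∫ v in (0:ℝ)..x, Q n p v) ≤ ∫ v in (0:ℝ)..x, (1:ℝ) := by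
        refine intervalIntegral.integral_mono_on hx.1
          ((Q_cont n p).intervalIntegrable 0 x) (intervalIntegrable_const) ?_
        exact fun v hv => ih _ ⟨hv.1, hv.2.trans hx.2⟩
      have h2 : (1 - x) * Q n (p-1) x ≤ 1 - x := by
        nlinarith [Q_nonneg n (p-1) hx, ih (p-1) hx, hx.1, hx.2]
      rw [intervalIntegral.integral_const, smul_eq_mul, mul_one] at h1
      linarith

lemma Q_vanish (n p : ℕ) (h : n + 1 < p) (x : ℝ) : Q n p x = 0 := by
  induction n generalizing p x with
  | zero => simp only [Q]; split; · omega
            rfl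
  | succ n ih =>
    simp only [Q]
    split
    · rfl
    · rw [ih (p-1) (by omega)]
      simp [ih p (by omega)]

noncomputable def Hs (u : ℝ) (n : ℕ) (x : ℝ) : ℝ :=
  ∑ p ∈ Finset.range (n+1), Q n (p+1) x * u^(p+1)

lemma Hs_cont (u : ℝ) (n : ℕ) : Continuous (Hs u n) :=
  continuous_finset_sum _ fun p _ => (Q_cont n (p+1)).mul continuous_const

lemma Hs_zero (u : ℝ) (x : ℝ) : Hs u 0 x = u := by
  simp [Hs, Q]

lemma Hs_rec (u : ℝ) (n : ℕ) (x : ℝ) :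
    Hs u (n+1) x = (1-x)*u*Hs u n x + (∫ v in (0:ℝ)..x, Hs u n v)
      - (if n = 0 then u*x else 0) := by
  have hQ1 : Q (n+1) 1 x = 0 := by simp [Q]
  have step1 : Hs u (n+1) x = ∑ p ∈ Finset.range (n+1), Q (n+1) (p+2) x * u^(p+2) := by
    rw [Hs, Finset.sum_range_succ']
    simp [hQ1]
  have hQexp : ∀ p : ℕ, Q (n+1) (p+2) x
      = (1-x) * Q n (p+1) x + ∫ v in (0:ℝ)..x, Q n (p+2) v := by
    intro p
    show Q (n+1) (p+2) x = _
    rw [Q]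
    simp
  have step2 : Hs u (n+1) x
      = (1-x)*u*Hs u n x
        + ∑ p ∈ Finset.range (n+1), (∫ v in (0:ℝ)..x, Q n (p+2) v) * u^(p+2) := by
    rw [step1]
    rw [Finset.sum_congr rfl (fun p _ => by rw [hQexp p, add_mul])]
    rw [Finset.sum_add_distrib]
    congr 1
    rw [Hs, Finset.mul_sum]
    apply Finset.sum_congr rfl
    intro p _
    ring
  have step3 : ∑ p ∈ Finset.range (n+1), (∫ v in (0:ℝ)..x, Q n (p+2) v) * u^(p+2)
      = ∫ v in (0:ℝ)..x, (Hs u n v - Q n 1 v * u) := by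
    have : ∀ p ∈ Finset.range (n+1), IntervalIntegrable (fun v => Q n (p+2) v * u^(p+2))
        volume 0 x := fun p _ => ((Q_cont n (p+2)).mul continuous_const).intervalIntegrable 0 x
    rw [Finset.sum_congr rfl (fun p _ => (intervalIntegral.integral_mul_const _ _).symm),
      ← intervalIntegral.integral_finset_sum this]
    apply intervalIntegral.integral_congr
    intro v _
    show ∑ p ∈ Finset.range (n+1), Q n (p+2) v * u^(p+2) = Hs u n v - Q n 1 v * u
    have : Hs u n v = ∑ p ∈ Finset.range n, Q n (p+2) v * u^(p+2) + Q n 1 v * u := by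
      rw [Hs, Finset.sum_range_succ']
      norm_num
    rw [this]
    rw [Finset.sum_range_succ, Q_vanish n (n+2) (by omega)]
    ring
  have step4 : (∫ v in (0:ℝ)..x, (Hs u n v - Q n 1 v * u))
      = (∫ v in (0:ℝ)..x, Hs u n v) - (if n = 0 then u*x else 0) := by
    rw [intervalIntegral.integral_sub (f := fun v => Hs u n v) (g := fun v => Q n 1 v * u)
      ((Hs_cont u n).intervalIntegrable 0 x)
      (((Q_cont n 1).mul continuous_const).intervalIntegrable 0 x :
        IntervalIntegrable (fun v => Q n 1 v * u) volume 0 x)]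
    congr 1
    cases n with
    | zero => simp [Q, mul_comm]
    | succ m =>
      have : ∀ v : ℝ, Q (m+1) 1 v * u = 0 := by intro v; simp [Q]
      simp [this]
  rw [step2, step3, step4]
  ring

noncomputable def Phi (u z x : ℝ) : ℝ :=
  u/(1-u) + (u/(1-u*z) - u/(1-u)) * ((1-u*z)/(1-(1-x)*u*z))^(1-1/u : ℝ)

section
variable {u z : ℝ} (hu0 : 0 < u) (hu1 : u < 1) (hz0 : 0 ≤ z) (hz1 : z < 1)

lemma huz1 (hu0 : 0 < u) (hu1 : u < 1) (hz0 : 0 ≤ z) (hz1 : z < 1) : u*z < 1 := by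
  nlinarith

lemma hD_pos (hu0 : 0 < u) (hu1 : u < 1) (hz0 : 0 ≤ z) (hz1 : z < 1)
    {v : ℝ} (hv : v ∈ Set.Icc (0:ℝ) 1) : 0 < 1-(1-v)*u*z := by
  have h1 : (1-v)*u*z ≤ u*z := by nlinarith [mul_nonneg (mul_nonneg hv.1 hu0.le) hz0]
  nlinarith [huz1 hu0 hu1 hz0 hz1]

lemma deriv_key {v : ℝ} (hv : v ∈ Set.Icc (0:ℝ) 1)
    (hu0 : 0 < u) (hu1 : u < 1) (hz0 : 0 ≤ z) (hz1 : z < 1) :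
    HasDerivAt (fun w => (1-u*z)^(1-1/u : ℝ) * (1-(1-w)*u*z) ^ (1/u : ℝ))
      (z * ((1-u*z)/(1-(1-v)*u*z))^(1-1/u : ℝ)) v := by
  have hDpos := hD_pos hu0 hu1 hz0 hz1 hv
  have hzupos : 0 < 1 - u*z := by linarith [huz1 hu0 hu1 hz0 hz1]
  have hD : HasDerivAt (fun w : ℝ => 1-(1-w)*u*z) (u*z) v := by
    have h : (fun w : ℝ => 1-(1-w)*u*z) = fun w => 1 - (1-w)*(u*z) := by
      funext w; ring
    rw [h]
    simpa using (((hasDerivAt_id v).const_sub (1:ℝ)).mul_const (u*z)).const_sub (1:ℝ)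
  have h2 := (hD.rpow_const (p := (1/u : ℝ)) (Or.inl hDpos.ne')).const_mul ((1-u*z)^(1-1/u : ℝ))
  refine h2.congr_deriv ?_
  symm
  rw [Real.div_rpow hzupos.le hDpos.le]
  rw [show (1/u : ℝ) - 1 = -(1-1/u : ℝ) by ring, Real.rpow_neg hDpos.le]
  field_simp
end

section
variable {u z x : ℝ}

lemma Tc_contOn (hu0 : 0 < u) (hu1 : u < 1) (hz0 : 0 ≤ z) (hz1 : z < 1)
    (hx : x ∈ Set.Icc (0:ℝ) 1) :
    ContinuousOn (fun v => ((1-u*z)/(1-(1-v)*u*z))^(1-1/u : ℝ)) (Set.uIcc 0 x) := by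
  have hsub : Set.uIcc (0:ℝ) x ⊆ Set.Icc 0 1 := by
    rw [Set.uIcc_of_le hx.1]
    exact Set.Icc_subset_Icc le_rfl hx.2
  apply ContinuousOn.rpow_const
  · apply ContinuousOn.div continuousOn_const
    · fun_prop
    · exact fun v hv => (hD_pos hu0 hu1 hz0 hz1 (hsub hv)).ne'
  · intro v hv
    left
    have := hD_pos hu0 hu1 hz0 hz1 (hsub hv)
    have h2 : 0 < 1 - u*z := by linarith [huz1 hu0 hu1 hz0 hz1]
    positivity

lemma Phi_integral (hu0 : 0 < u) (hu1 : u < 1) (hz0 : 0 ≤ z) (hz1 : z < 1)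
    (hx : x ∈ Set.Icc (0:ℝ) 1) :
    ∫ v in (0:ℝ)..x, z * ((1-u*z)/(1-(1-v)*u*z))^(1-1/u : ℝ)
      = (1-u*z)^(1-1/u : ℝ) * (1-(1-x)*u*z)^(1/u : ℝ) - (1-u*z) := by
  have hsub : Set.uIcc (0:ℝ) x ⊆ Set.Icc 0 1 := by
    rw [Set.uIcc_of_le hx.1]
    exact Set.Icc_subset_Icc le_rfl hx.2
  have h := intervalIntegral.integral_eq_sub_of_hasDerivAt
    (f := fun w => (1-u*z)^(1-1/u : ℝ) * (1-(1-w)*u*z)^(1/u : ℝ))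
    (f' := fun v => z * ((1-u*z)/(1-(1-v)*u*z))^(1-1/u : ℝ))
    (fun v hv => deriv_key (hsub hv) hu0 hu1 hz0 hz1)
    (((Tc_contOn hu0 hu1 hz0 hz1 hx).const_smul z).intervalIntegrable)
  rw [h]
  have h2 : 0 < 1 - u*z := by linarith [huz1 hu0 hu1 hz0 hz1]
  show (1-u*z)^(1-1/u : ℝ) * (1-(1-x)*u*z)^(1/u : ℝ)
      - (1-u*z)^(1-1/u : ℝ) * (1-(1-(0:ℝ))*u*z)^(1/u : ℝ) = _
  have h3 : ((1:ℝ)-(1-(0:ℝ))*u*z) = 1-u*z := by ring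
  rw [h3, ← Real.rpow_add h2, show (1-1/u) + 1/u = (1:ℝ) by ring, Real.rpow_one]

lemma Phi_fixed (hu0 : 0 < u) (hu1 : u < 1) (hz0 : 0 ≤ z) (hz1 : z < 1)
    (hx : x ∈ Set.Icc (0:ℝ) 1) :
    Phi u z x = u + (1-x)*u*z*Phi u z x + z*(∫ v in (0:ℝ)..x, Phi u z v) - z*u*x := by
  have h2 : 0 < 1 - u*z := by linarith [huz1 hu0 hu1 hz0 hz1]
  have hDx : 0 < 1-(1-x)*u*z := hD_pos hu0 hu1 hz0 hz1 hx
  have hu' : (1:ℝ) - u ≠ 0 := by linarith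
  set c : ℝ := 1-1/u with hc
  set A : ℝ := u/(1-u) with hA
  set B : ℝ := u/(1-u*z) - u/(1-u) with hB
  have hint : z*(∫ v in (0:ℝ)..x, Phi u z v)
      = z*A*x + B*((1-u*z)^c*(1-(1-x)*u*z)^(1/u : ℝ) - (1-u*z)) := by
    rw [← intervalIntegral.integral_const_mul]
    have hcong : ∀ v ∈ Set.uIcc (0:ℝ) x, z * Phi u z v
        = z*A + B*(z*((1-u*z)/(1-(1-v)*u*z))^c) := by
      intro v _
      simp only [Phi, hA, hB, hc]
      ring
    rw [intervalIntegral.integral_congr hcong]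
    have i1 : IntervalIntegrable (fun _ : ℝ => z*A) volume 0 x := intervalIntegrable_const
    have i2 : IntervalIntegrable (fun v => B*(z*((1-u*z)/(1-(1-v)*u*z))^c)) volume 0 x :=
      (((Tc_contOn hu0 hu1 hz0 hz1 hx).const_smul z).const_smul B).intervalIntegrable
    rw [intervalIntegral.integral_add i1 i2, intervalIntegral.integral_const,
      intervalIntegral.integral_const_mul, Phi_integral hu0 hu1 hz0 hz1 hx]
    simp only [smul_eq_mul]
    ring
  rw [hint]
  have hR : (1-u*z)^c * (1-(1-x)*u*z)^(1/u : ℝ)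
      = (1-(1-x)*u*z) * ((1-u*z)/(1-(1-x)*u*z))^c := by
    rw [Real.div_rpow h2.le hDx.le, show (1/u : ℝ) = 1 + (-c) by rw [hc]; ring,
      Real.rpow_add hDx 1 (-c), Real.rpow_one, Real.rpow_neg hDx.le]
    field_simp
  rw [hR]
  simp only [Phi, ← hc, ← hA, ← hB]
  generalize ((1-u*z)/(1-(1-x)*u*z))^c = P
  have huz' : (1:ℝ)-u*z ≠ 0 := h2.ne'
  simp only [hA, hB]
  field_simp
  ring

lemma Phi_contOn (hu0 : 0 < u) (hu1 : u < 1) (hz0 : 0 ≤ z) (hz1 : z < 1) :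
    ContinuousOn (Phi u z) (Set.Icc (0:ℝ) 1) := by
  apply ContinuousOn.add continuousOn_const
  apply ContinuousOn.mul continuousOn_const
  apply ContinuousOn.rpow_const
  · apply ContinuousOn.div continuousOn_const
    · fun_prop
    · exact fun v hv => (hD_pos hu0 hu1 hz0 hz1 hv).ne'
  · intro v hv
    left
    have := hD_pos hu0 hu1 hz0 hz1 hv
    have h2 : 0 < 1 - u*z := by linarith [huz1 hu0 hu1 hz0 hz1]
    positivity

lemma Phi_bound (hu0 : 0 < u) (hu1 : u < 1) (hz0 : 0 ≤ z) (hz1 : z < 1)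
    (hx : x ∈ Set.Icc (0:ℝ) 1) :
    |Phi u z x| ≤ u/(1-u) + (u/(1-u) - u/(1-u*z)) * (1-u*z)^(1-1/u : ℝ) := by
  have h2 : 0 < 1 - u*z := by linarith [huz1 hu0 hu1 hz0 hz1]
  have hDx : 0 < 1-(1-x)*u*z := hD_pos hu0 hu1 hz0 hz1 hx
  have hu' : (0:ℝ) < 1 - u := by linarith
  have hc : (1-1/u : ℝ) ≤ 0 := by
    have : (1:ℝ) ≤ 1/u := one_le_one_div hu0 hu1.le
    linarith
  set P : ℝ := ((1-u*z)/(1-(1-x)*u*z))^(1-1/u : ℝ) with hP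
  have hT1 : (1-u*z)/(1-(1-x)*u*z) ≤ 1 := by
    rw [div_le_one hDx]
    nlinarith [mul_nonneg (mul_nonneg hx.1 hu0.le) hz0]
  have hT2 : 1-u*z ≤ (1-u*z)/(1-(1-x)*u*z) := by
    rw [le_div_iff₀ hDx]
    nlinarith [mul_nonneg (mul_nonneg (mul_nonneg (by linarith [hx.2] : (0:ℝ) ≤ 1-x) hu0.le) hz0) h2.le]
  have hTpos : 0 < (1-u*z)/(1-(1-x)*u*z) := div_pos h2 hDx
  have hP1 : 1 ≤ P := Real.one_le_rpow_of_pos_of_le_one_of_nonpos hTpos hT1 hc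
  have hP2 : P ≤ (1-u*z)^(1-1/u : ℝ) := Real.rpow_le_rpow_of_nonpos h2 hT2 hc
  have hB : u/(1-u*z) - u/(1-u) ≤ 0 := by
    rw [sub_nonpos, div_le_div_iff₀ h2 hu']
    nlinarith [mul_nonneg hu0.le (sub_nonneg.2 (mul_le_of_le_one_right hu0.le hz1.le))]
  have hA : 0 ≤ u/(1-u) := by positivity
  rw [abs_le]
  constructor
  · simp only [Phi]
    nlinarith
  · simp only [Phi]
    nlinarith

noncomputable def S (u z : ℝ) (N : ℕ) (x : ℝ) : ℝ :=
  ∑ n ∈ Finset.range N, Hs u n x * z^n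

lemma S_cont (u z : ℝ) (N : ℕ) : Continuous (S u z N) :=
  continuous_finset_sum _ fun n _ => (Hs_cont u n).mul continuous_const

lemma S_one (u z : ℝ) (x : ℝ) : S u z 1 x = u := by
  simp [S, Hs_zero]

lemma S_expand (u z : ℝ) (M : ℕ) (x : ℝ) :
    S u z (M+1) x = u + (1-x)*u*z*(S u z M x)
      + z*(∫ v in (0:ℝ)..x, S u z M v) - (if 1 ≤ M then z*u*x else 0) := by
  rw [S, Finset.sum_range_succ']
  simp only [pow_zero, mul_one, Hs_zero]
  have e1 : ∀ n ∈ Finset.range M, Hs u (n+1) x * z^(n+1)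
      = (1-x)*u*z*(Hs u n x * z^n) + z*((∫ v in (0:ℝ)..x, Hs u n v) * z^n)
        - (if n = 0 then u*x*z^(n+1) else 0) := by
    intro n _
    rw [Hs_rec]
    split <;> ring
  rw [Finset.sum_congr rfl e1]
  rw [Finset.sum_sub_distrib, Finset.sum_add_distrib, ← Finset.mul_sum, ← Finset.mul_sum]
  have e2 : ∑ n ∈ Finset.range M, (∫ v in (0:ℝ)..x, Hs u n v) * z^n
      = ∫ v in (0:ℝ)..x, S u z M v := by
    rw [Finset.sum_congr rfl
      (fun n _ => (intervalIntegral.integral_mul_const (z^n) (Hs u n)).symm),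
      ← intervalIntegral.integral_finset_sum]
    · rfl
    · exact fun n _ => ((Hs_cont u n).mul continuous_const).intervalIntegrable 0 x
  have e3 : ∑ n ∈ Finset.range M, (if n = 0 then u*x*z^(n+1) else 0)
      = if 1 ≤ M then z*u*x else 0 := by
    rw [Finset.sum_ite_eq' (Finset.range M) 0 (fun n => u*x*z^(n+1))]
    by_cases hM : 1 ≤ M
    · have h0 : (0:ℕ) ∈ Finset.range M := by simp only [Finset.mem_range]; omega
      rw [if_pos h0, if_pos hM]
      ring
    · have h0 : (0:ℕ) ∉ Finset.range M := by simp only [Finset.mem_range]; omega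
      rw [if_neg h0, if_neg hM]
  rw [e2, e3, S]
  ring

lemma M_nonneg (hu0 : 0 < u) (hu1 : u < 1) (hz0 : 0 ≤ z) (hz1 : z < 1) :
    0 ≤ u/(1-u) + (u/(1-u) - u/(1-u*z)) * (1-u*z)^(1-1/u : ℝ) := by
  have h2 : 0 < 1 - u*z := by linarith [huz1 hu0 hu1 hz0 hz1]
  have hu' : (0:ℝ) < 1 - u := by linarith
  have hB : 0 ≤ u/(1-u) - u/(1-u*z) := by
    rw [sub_nonneg, div_le_div_iff₀ h2 hu']
    nlinarith [mul_nonneg hu0.le (sub_nonneg.2 (mul_le_of_le_one_right hu0.le hz1.le))]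
  have := Real.rpow_nonneg h2.le (1-1/u : ℝ)
  positivity

lemma S_err (hu0 : 0 < u) (hu1 : u < 1) (hz0 : 0 ≤ z) (hz1 : z < 1) (N : ℕ) :
    ∀ x ∈ Set.Icc (0:ℝ) 1, |S u z (N+1) x - Phi u z x|
      ≤ (u + (u/(1-u) + (u/(1-u) - u/(1-u*z)) * (1-u*z)^(1-1/u : ℝ))) * z^N := by
  set M := u/(1-u) + (u/(1-u) - u/(1-u*z)) * (1-u*z)^(1-1/u : ℝ) with hM
  have hM0 : 0 ≤ M := M_nonneg hu0 hu1 hz0 hz1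
  induction N with
  | zero =>
    intro x hx
    rw [pow_zero, mul_one, S_one]
    calc |u - Phi u z x| ≤ |u| + |Phi u z x| := abs_sub _ _
      _ ≤ u + M := add_le_add (le_of_eq (abs_of_nonneg hu0.le))
          (Phi_bound hu0 hu1 hz0 hz1 hx)
  | succ N ih =>
    intro x hx
    have hsub : Set.uIcc (0:ℝ) x ⊆ Set.Icc 0 1 := by
      rw [Set.uIcc_of_le hx.1]
      exact Set.Icc_subset_Icc le_rfl hx.2
    have hrec : S u z (N+1+1) x - Phi u z x
        = (1-x)*u*z*(S u z (N+1) x - Phi u z x)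
          + z*(∫ v in (0:ℝ)..x, (S u z (N+1) v - Phi u z v)) := by
      have hint : (∫ v in (0:ℝ)..x, (S u z (N+1) v - Phi u z v))
          = (∫ v in (0:ℝ)..x, S u z (N+1) v) - ∫ v in (0:ℝ)..x, Phi u z v :=
        intervalIntegral.integral_sub ((S_cont u z (N+1)).intervalIntegrable 0 x)
          (((Phi_contOn hu0 hu1 hz0 hz1).mono hsub).intervalIntegrable)
      have hfix := Phi_fixed hu0 hu1 hz0 hz1 hx
      have hexp := S_expand u z (N+1) x
      rw [if_pos (by omega : 1 ≤ N+1)] at hexp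
      rw [hint]
      linear_combination hexp - hfix
    set K := (u + M) * z^N with hK
    have hK0 : 0 ≤ K := mul_nonneg (by linarith) (pow_nonneg hz0 N)
    have hE : |S u z (N+1) x - Phi u z x| ≤ K := ih x hx
    have hI : |∫ v in (0:ℝ)..x, (S u z (N+1) v - Phi u z v)| ≤ K * x := by
      have hb : ∀ v ∈ Set.uIoc (0:ℝ) x, ‖S u z (N+1) v - Phi u z v‖ ≤ K := by
        intro v hv
        rw [Set.uIoc_of_le hx.1] at hv
        exact ih v ⟨hv.1.le, hv.2.trans hx.2⟩
      have := intervalIntegral.norm_integral_le_of_norm_le_const hb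
      rwa [Real.norm_eq_abs, sub_zero, abs_of_nonneg hx.1] at this
    rw [hrec]
    have hnn : (0:ℝ) ≤ (1-x)*u*z :=
      mul_nonneg (mul_nonneg (by linarith [hx.2]) hu0.le) hz0
    have b1 : |(1-x)*u*z*(S u z (N+1) x - Phi u z x)| ≤ (1-x)*u*z*K := by
      rw [abs_mul, abs_of_nonneg hnn]
      exact mul_le_mul_of_nonneg_left hE hnn
    have b2 : |z*(∫ v in (0:ℝ)..x, (S u z (N+1) v - Phi u z v))| ≤ z*(K*x) := by
      rw [abs_mul, abs_of_nonneg hz0]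
      exact mul_le_mul_of_nonneg_left hI hz0
    have h1 : |(1-x)*u*z*(S u z (N+1) x - Phi u z x)
        + z*(∫ v in (0:ℝ)..x, (S u z (N+1) v - Phi u z v))|
        ≤ (1-x)*u*z*K + z*(K*x) :=
      (abs_add_le _ _).trans (add_le_add b1 b2)
    refine h1.trans ?_
    rw [pow_succ]
    have key : (1-x)*u*z*K + z*(K*x) ≤ (u+M) * (z^N * z) := by
      have expand : (u+M) * (z^N * z) = z*K := by rw [hK]; ring
      rw [expand]
      nlinarith [mul_nonneg (mul_nonneg hz0 hK0)
        (mul_nonneg (sub_nonneg.2 hx.2) (sub_nonneg.2 hu1.le))]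
    exact key

lemma hasSum_Hs (hu0 : 0 < u) (hu1 : u < 1) (hz0 : 0 ≤ z) (hz1 : z < 1)
    (hx : x ∈ Set.Icc (0:ℝ) 1) :
    HasSum (fun n => Hs u n x * z^n) (Phi u z x) := by
  have hnn : ∀ n, 0 ≤ Hs u n x * z^n := fun n =>
    mul_nonneg (Finset.sum_nonneg fun p _ =>
      mul_nonneg (Q_nonneg _ _ hx) (pow_nonneg hu0.le _)) (pow_nonneg hz0 _)
  rw [hasSum_iff_tendsto_nat_of_nonneg hnn]
  have h0 : Filter.Tendsto (fun N : ℕ =>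
      (u + (u/(1-u) + (u/(1-u) - u/(1-u*z)) * (1-u*z)^(1-1/u : ℝ))) * z^N)
      Filter.atTop (nhds 0) := by
    simpa using (tendsto_pow_atTop_nhds_zero_of_lt_one hz0 hz1).const_mul
      (u + (u/(1-u) + (u/(1-u) - u/(1-u*z)) * (1-u*z)^(1-1/u : ℝ)))
  have h2 := squeeze_zero_norm (fun N => by
    rw [Real.norm_eq_abs]; exact S_err hu0 hu1 hz0 hz1 N x hx) h0
  have h3 : Filter.Tendsto (fun N : ℕ => S u z (N+1) x) Filter.atTop (nhds (Phi u z x)) := by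
    have := h2.add_const (Phi u z x)
    simpa using this
  have h4 := (Filter.tendsto_add_atTop_iff_nat (f := fun N => S u z N x) 1).mp h3
  exact h4

/-- For `x ∈ [0,1]`, `u ∈ (0,1)` and `z ∈ [0,1)`, the double series
`∑_{p≥1} ∑_{n≥0} Q_{n,p}(x) u^p z^n` converges, with sum
`u/(1−u) + (u/(1−uz) − u/(1−u))·((1−uz)/(1−(1−x)uz))^{1−1/u}`, where the power is the
real power of the positive base `(1−uz)/(1−(1−x)uz)`. -/
theorem Q_genFun_x (x u z : ℝ) (hx : x ∈ Set.Icc (0:ℝ) 1) (hu : u ∈ Set.Ioo (0:ℝ) 1)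
    (hz : z ∈ Set.Ico (0:ℝ) 1) :
    HasSum (fun q : ℕ × ℕ => Q q.2 (q.1 + 1) x * u ^ (q.1 + 1) * z ^ q.2)
      (u / (1 - u) + (u / (1 - u * z) - u / (1 - u)) *
        ((1 - u * z) / (1 - (1 - x) * u * z)) ^ (1 - 1 / u : ℝ)) := by

  obtain ⟨hu0, hu1⟩ := hu
  obtain ⟨hz0, hz1⟩ := hz
  set F : ℕ × ℕ → ℝ := fun q => Q q.2 (q.1 + 1) x * u ^ (q.1 + 1) * z ^ q.2 with hF
  have hFnn : ∀ q, 0 ≤ F q := fun q =>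
    mul_nonneg (mul_nonneg (Q_nonneg _ _ hx) (pow_nonneg hu0.le _)) (pow_nonneg hz0 _)
  have hgsum : Summable (fun q : ℕ × ℕ => u ^ (q.1+1) * z ^ q.2) := by
    have h1 : Summable (fun p : ℕ => u ^ (p+1)) := by
      have := (summable_geometric_of_lt_one hu0.le hu1).mul_left u
      apply this.congr
      intro p
      rw [pow_succ]
      ring
    have h2 : Summable (fun n : ℕ => z ^ n) := summable_geometric_of_lt_one hz0 hz1
    exact h1.mul_of_nonneg h2 (fun p => pow_nonneg hu0.le _) (fun n => pow_nonneg hz0 _)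
  have hFle : ∀ q, F q ≤ u ^ (q.1+1) * z ^ q.2 := by
    intro q
    have h1 := Q_le_one q.2 (q.1+1) hx
    calc F q = Q q.2 (q.1+1) x * (u ^ (q.1+1) * z ^ q.2) := by rw [hF]; ring
      _ ≤ 1 * (u ^ (q.1+1) * z ^ q.2) :=
          mul_le_mul_of_nonneg_right h1 (by positivity)
      _ = _ := one_mul _
  have hFsum : Summable F := Summable.of_nonneg_of_le hFnn hFle hgsum
  have key : ∑' q, F q = Phi u z x := by
    rw [Summable.tsum_prod hFsum]
    rw [← Summable.tsum_comm (f := fun p n => F (p, n)) hFsum]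
    have inner : ∀ n : ℕ, ∑' p, F (p, n) = Hs u n x * z^n := by
      intro n
      rw [tsum_eq_sum (s := Finset.range (n+1))
        (fun p hp => by
          have hlt : n + 1 < p + 1 := by
            simp only [Finset.mem_range] at hp
            omega
          show Q n (p+1) x * u ^ (p+1) * z ^ n = 0
          rw [Q_vanish n (p+1) hlt]
          ring)]
      rw [Hs, Finset.sum_mul]
    rw [tsum_congr inner]
    exact (hasSum_Hs hu0 hu1 hz0 hz1 hx).tsum_eq
  have hmain := hFsum.hasSum
  rw [key] at hmain
  exact hmain
end
end

section
/- For all integers n ≥ 0 and p ≥ 1 and for every real x, ∑_{k=1}^{p} R_{n,p,k}(x) = Q_{n,p}(x). -/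
open MeasureTheory intervalIntegral

/-- `R n p k x` : probability that, in a dart game with `p` remaining players where the
probability of beating the best throw so far is `x`, the `k`-th player in throwing order
wins after exactly `n` further throws. -/
noncomputable def R : ℕ → ℕ → ℕ → ℝ → ℝ
  | 0, p, k, _ => if p = 1 ∧ k = 1 then 1 else 0
  | n + 1, p, k, x =>
      if p ≤ 1 then 0
      else if k = 1 then ∫ v in (0:ℝ)..x, R n p p v
      else (1 - x) * R n (p - 1) (k - 1) x + ∫ v in (0:ℝ)..x, R n p (k - 1) v

lemma R_cont (n p k : ℕ) : Continuous (R n p k) := by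
  induction n generalizing p k with
  | zero =>
    show Continuous fun _ : ℝ => if p = 1 ∧ k = 1 then (1:ℝ) else 0
    exact continuous_const
  | succ n ih =>
    show Continuous fun x => if p ≤ 1 then (0:ℝ)
      else if k = 1 then ∫ v in (0:ℝ)..x, R n p p v
      else (1 - x) * R n (p - 1) (k - 1) x + ∫ v in (0:ℝ)..x, R n p (k - 1) v
    split
    · exact continuous_const
    · split
      · exact intervalIntegral.continuous_primitive
          (fun a b => (ih p p).intervalIntegrable a b) 0
      · exact ((continuous_const.sub continuous_id).mul (ih (p-1) (k-1))).add
          (intervalIntegral.continuous_primitive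
            (fun a b => (ih p (k-1)).intervalIntegrable a b) 0)

/-- For all `n ≥ 0`, `p ≥ 1` and every real `x`,
`∑_{k=1}^{p} R_{n,p,k}(x) = Q_{n,p}(x)`. -/
theorem sum_R_eq_Q (n p : ℕ) (hp : 1 ≤ p) (x : ℝ) :
    ∑ k ∈ Finset.Icc 1 p, R n p k x = Q n p x := by
  induction n generalizing p x with
  | zero =>
    rcases eq_or_lt_of_le hp with h | h
    · simp [← h, R, Q]
    · rw [show Q 0 p x = if p = 1 then 1 else 0 from rfl, if_neg (by omega)]
      apply Finset.sum_eq_zero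
      intro k hk
      show (if p = 1 ∧ k = 1 then (1:ℝ) else 0) = 0
      rw [if_neg (by omega)]
  | succ n ih =>
    rcases eq_or_lt_of_le hp with h | h
    · simp [← h, R, Q]
    · have hp1 : ¬ p ≤ 1 := by omega
      rw [show Q (n+1) p x = if p ≤ 1 then 0 else
          (1 - x) * Q n (p - 1) x + ∫ v in (0:ℝ)..x, Q n p v from rfl, if_neg hp1]
      have h1 : Finset.Icc 1 p = insert 1 (Finset.Icc 2 p) := by
        apply Finset.ext; intro a; simp; omega
      rw [h1, Finset.sum_insert (by simp)]
      have hR1 : R (n+1) p 1 x = ∫ v in (0:ℝ)..x, R n p p v := by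
        rw [show R (n+1) p 1 x = if p ≤ 1 then 0 else if (1:ℕ) = 1 then
          ∫ v in (0:ℝ)..x, R n p p v else (1 - x) * R n (p - 1) 0 x +
          ∫ v in (0:ℝ)..x, R n p 0 v from rfl, if_neg hp1, if_pos rfl]
      have hRk : ∀ k ∈ Finset.Icc 2 p, R (n+1) p k x =
          (1 - x) * R n (p - 1) (k - 1) x + ∫ v in (0:ℝ)..x, R n p (k - 1) v := by
        intro k hk
        simp only [Finset.mem_Icc] at hk
        rw [show R (n+1) p k x = if p ≤ 1 then 0 else if k = 1 then
          ∫ v in (0:ℝ)..x, R n p p v else (1 - x) * R n (p - 1) (k - 1) x +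
          ∫ v in (0:ℝ)..x, R n p (k - 1) v from rfl, if_neg hp1, if_neg (by omega)]
      rw [hR1, Finset.sum_congr rfl hRk, Finset.sum_add_distrib, ← Finset.mul_sum]
      have hmap : ∀ (f : ℕ → ℝ), ∑ k ∈ Finset.Icc 2 p, f (k - 1)
          = ∑ j ∈ Finset.Icc 1 (p-1), f j := by
        intro f
        apply Finset.sum_nbij' (fun k => k - 1) (fun j => j + 1) <;>
          simp +contextual <;> omega
      have e1 := hmap (fun j => R n (p-1) j x)
      have e2 := hmap (fun j => ∫ v in (0:ℝ)..x, R n p j v)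
      rw [e1, e2, ih (p-1) (by omega) x]
      have e4 : (∫ v in (0:ℝ)..x, Q n p v)
          = ∑ j ∈ Finset.Icc 1 p, ∫ v in (0:ℝ)..x, R n p j v := by
        rw [show (∫ v in (0:ℝ)..x, Q n p v)
            = ∫ v in (0:ℝ)..x, ∑ j ∈ Finset.Icc 1 p, R n p j v from
          intervalIntegral.integral_congr (fun v _ => (ih p hp v).symm)]
        exact intervalIntegral.integral_finset_sum
          (fun j _ => (R_cont n p j).intervalIntegrable 0 x)
      have hsplit : Finset.Icc 1 p = insert p (Finset.Icc 1 (p-1)) := by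
        apply Finset.ext; intro a; simp; omega
      rw [e4, hsplit, Finset.sum_insert (by simp; omega)]
      ring
end

section
/- For every x ∈ [0,1] and every real z: ∑_{n≥0} R_{n,2,1}(x)·z^n = 1 + ((z−1)/2)·e^{xz} − ((z+1)/2)·e^{−xz}, and ∑_{n≥0} R_{n,2,2}(x)·z^n = ((z−1)/2)·e^{xz} + ((z+1)/2)·e^{−xz} (in particular both series converge). -/
open MeasureTheory intervalIntegral

/-- closed form helper -/
noncomputable def B (n : ℕ) (x : ℝ) : ℝ := x ^ n / n.factorial - x ^ (n + 1) / (n + 1).factorial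

lemma B_intervalIntegrable (n : ℕ) (x : ℝ) :
    IntervalIntegrable (fun v => B n v) volume 0 x := by
  apply Continuous.intervalIntegrable
  unfold B
  continuity

lemma integral_B (n : ℕ) (x : ℝ) : (∫ v in (0:ℝ)..x, B n v) = B (n + 1) x := by
  unfold B
  rw [intervalIntegral.integral_sub (((continuous_pow n).div_const _).intervalIntegrable 0 x)
      (((continuous_pow (n+1)).div_const _).intervalIntegrable 0 x)]
  rw [intervalIntegral.integral_div, intervalIntegral.integral_div,
    integral_pow, integral_pow]
  have h1 : ((n:ℝ) + 1) ≠ 0 := by positivity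
  have h2 : ((n:ℝ) + 1 + 1) ≠ 0 := by positivity
  field_simp [Nat.factorial_succ]
  simp [Nat.factorial_succ]
  ring

lemma R_one (n : ℕ) (x : ℝ) : R n 1 1 x = if n = 0 then 1 else 0 := by
  cases n with
  | zero => simp [R]
  | succ n => simp [R]

lemma R_closed (n : ℕ) :
    (∀ x : ℝ, R (n + 1) 2 1 x = if Odd n then B n x else 0) ∧
    (∀ x : ℝ, R (n + 1) 2 2 x = if Even n then B n x else 0) := by
  induction n with
  | zero =>
    constructor
    · intro x
      simp only [R, show ¬(2:ℕ) ≤ 1 by norm_num, if_false, if_true]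
      norm_num
    · intro x
      simp only [R]
      norm_num [R_one, B]
  | succ n ih =>
    obtain ⟨ih1, ih2⟩ := ih
    constructor
    · intro x
      show (if 2 ≤ 1 then _ else if (1:ℕ) = 1 then ∫ v in (0:ℝ)..x, R (n+1) 2 2 v else _) = _
      rw [if_neg (by norm_num), if_pos rfl]
      have : (∫ v in (0:ℝ)..x, R (n+1) 2 2 v)
          = ∫ v in (0:ℝ)..x, (if Even n then B n v else 0) := by
        congr 1; funext v; exact ih2 v
      rw [this]
      by_cases h : Even n
      · simp only [if_pos h, integral_B]
        rw [if_pos (Even.add_one h)]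
      · simp only [if_neg h, intervalIntegral.integral_zero]
        rw [if_neg (by simpa [Nat.even_add_one] using h)]
    · intro x
      show (if 2 ≤ 1 then _ else if (2:ℕ) = 1 then _
        else (1 - x) * R (n+1) 1 1 x + ∫ v in (0:ℝ)..x, R (n+1) 2 1 v) = _
      rw [if_neg (by norm_num), if_neg (by norm_num)]
      rw [R_one, if_neg (Nat.succ_ne_zero n), mul_zero, zero_add]
      have : (∫ v in (0:ℝ)..x, R (n+1) 2 1 v)
          = ∫ v in (0:ℝ)..x, (if Odd n then B n v else 0) := by
        congr 1; funext v; exact ih1 v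
      rw [this]
      by_cases h : Odd n
      · simp only [if_pos h, integral_B]
        rw [if_pos (by simpa [Nat.even_add_one] using h)]
      · simp only [if_neg h, intervalIntegral.integral_zero]
        rw [if_neg (by simpa [Nat.even_add_one, Nat.not_odd_iff_even] using h)]

/-- For the 2-player game, `x ∈ [0,1]` and every real `z`:
`∑_{n≥0} R_{n,2,1}(x)·z^n = 1 + ((z−1)/2)·e^{xz} − ((z+1)/2)·e^{−xz}` and
`∑_{n≥0} R_{n,2,2}(x)·z^n = ((z−1)/2)·e^{xz} + ((z+1)/2)·e^{−xz}`
(in particular both series converge). -/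
theorem Rgen_two_players (x : ℝ) (hx : x ∈ Set.Icc (0:ℝ) 1) (z : ℝ) :
    HasSum (fun n : ℕ => R n 2 1 x * z ^ n)
      (1 + (z - 1) / 2 * Real.exp (x * z) - (z + 1) / 2 * Real.exp (-(x * z))) ∧
    HasSum (fun n : ℕ => R n 2 2 x * z ^ n)
      ((z - 1) / 2 * Real.exp (x * z) + (z + 1) / 2 * Real.exp (-(x * z))) := by
  -- exponential sums
  have hP : HasSum (fun n : ℕ => (x * z) ^ n / n.factorial) (Real.exp (x * z)) := by
    rw [Real.exp_eq_exp_ℝ]; exact NormedSpace.expSeries_div_hasSum_exp (x * z)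
  have hN : HasSum (fun n : ℕ => (-(x * z)) ^ n / n.factorial) (Real.exp (-(x * z))) := by
    rw [Real.exp_eq_exp_ℝ]; exact NormedSpace.expSeries_div_hasSum_exp (-(x * z))
  have hPs : HasSum (fun n : ℕ => (x * z) ^ (n + 1) / (n + 1).factorial)
      (Real.exp (x * z) - 1) := by
    rw [hasSum_nat_add_iff (f := fun n : ℕ => (x * z) ^ n / n.factorial) 1]
    simpa using hP
  have hNs : HasSum (fun n : ℕ => (-(x * z)) ^ (n + 1) / (n + 1).factorial)
      (Real.exp (-(x * z)) - 1) := by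
    rw [hasSum_nat_add_iff (f := fun n : ℕ => (-(x * z)) ^ n / n.factorial) 1]
    simpa using hN
  -- c n = B n x * z^(n+1)
  have hc : HasSum (fun n : ℕ => B n x * z ^ (n + 1))
      (z * Real.exp (x * z) - (Real.exp (x * z) - 1)) := by
    have h := ((hP.mul_left z).sub hPs)
    refine h.congr_fun fun n => ?_
    unfold B
    field_simp
    ring
  have hc' : HasSum (fun n : ℕ => (-1 : ℝ) ^ n * (B n x * z ^ (n + 1)))
      (z * Real.exp (-(x * z)) + (Real.exp (-(x * z)) - 1)) := by
    have h := ((hN.mul_left z).add hNs)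
    refine h.congr_fun fun n => ?_
    unfold B
    field_simp
    ring
  have h1cl := fun n => (R_closed n).1
  have h2cl := fun n => (R_closed n).2
  -- shifted sums for the two series
  have hodd : HasSum (fun n : ℕ => R (n + 1) 2 1 x * z ^ (n + 1))
      ((z - 1) / 2 * Real.exp (x * z) - (z + 1) / 2 * Real.exp (-(x * z)) + 1) := by
    have h := (hc.sub hc').div_const 2
    have he : ∀ n : ℕ, (B n x * z ^ (n + 1) - (-1 : ℝ) ^ n * (B n x * z ^ (n + 1))) / 2
        = R (n + 1) 2 1 x * z ^ (n + 1) := by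
      intro n
      rw [h1cl n x]
      rcases Nat.even_or_odd n with he | ho
      · rw [if_neg (by simpa [Nat.not_odd_iff_even] using he), he.neg_one_pow]
        ring
      · rw [if_pos ho, ho.neg_one_pow]
        ring
    have := h.congr_fun (fun n => (he n).symm)
    convert this using 1
    · rfl
    ring
  have heven : HasSum (fun n : ℕ => R (n + 1) 2 2 x * z ^ (n + 1))
      ((z - 1) / 2 * Real.exp (x * z) + (z + 1) / 2 * Real.exp (-(x * z))) := by
    have h := (hc.add hc').div_const 2
    have he : ∀ n : ℕ, (B n x * z ^ (n + 1) + (-1 : ℝ) ^ n * (B n x * z ^ (n + 1))) / 2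
        = R (n + 1) 2 2 x * z ^ (n + 1) := by
      intro n
      rw [h2cl n x]
      rcases Nat.even_or_odd n with he | ho
      · rw [if_pos he, he.neg_one_pow]
        ring
      · rw [if_neg (by simpa [Nat.not_even_iff_odd] using ho), ho.neg_one_pow]
        ring
    have := h.congr_fun (fun n => (he n).symm)
    convert this using 1
    · rfl
    ring
  have hR0 : ∀ k, R 0 2 k x = 0 := by intro k; simp [R]
  constructor
  · have := (hasSum_nat_add_iff (f := fun n : ℕ => R n 2 1 x * z ^ n) 1).1 hodd
    simpa [hR0, add_comm, sub_eq_add_neg, add_assoc, add_left_comm] using this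
  · have := (hasSum_nat_add_iff (f := fun n : ℕ => R n 2 2 x * z ^ n) 1).1 heven
    simpa [hR0] using this
end

section
/- For every x ∈ [0,1]: P_{2,1}(x) = 1 − e^{−x} and P_{2,2}(x) = e^{−x}. In particular, P_{2,1} = 1 − e^{−1} and P_{2,2} = e^{−1}. -/
open MeasureTheory intervalIntegral

/-- `P p k x = ∑_{n≥0} R_{n,p,k}(x)` : the probability that, when `p` players remain and
the probability of beating the best throw so far is `x`, the `k`-th player in throwing
order wins the game. -/
noncomputable def P (p k : ℕ) (x : ℝ) : ℝ := ∑' n : ℕ, R n p k x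

noncomputable def F (k : ℕ) (x : ℝ) : ℝ :=
    x ^ k / (Nat.factorial k) - x ^ (k+1) / (Nat.factorial (k+1))

lemma integF (k : ℕ) (x : ℝ) : (∫ v in (0:ℝ)..x, F k v) = F (k+1) x := by
  have h1 : IntervalIntegrable (fun v : ℝ => v ^ k / (Nat.factorial k)) volume 0 x :=
    (by continuity : Continuous fun v : ℝ => v ^ k / (Nat.factorial k)).intervalIntegrable _ _
  have h2 : IntervalIntegrable (fun v : ℝ => v ^ (k+1) / (Nat.factorial (k+1))) volume 0 x :=
    (by continuity : Continuous fun v : ℝ => v ^ (k+1) / (Nat.factorial (k+1))).intervalIntegrable _ _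
  simp only [F]
  rw [intervalIntegral.integral_sub h1 h2, intervalIntegral.integral_div,
    intervalIntegral.integral_div, integral_pow, integral_pow]
  have e1 : (Nat.factorial (k+1) : ℝ) = (k+1) * Nat.factorial k := by
    push_cast [Nat.factorial_succ]; ring
  have e2 : (Nat.factorial (k+2) : ℝ) = (k+2) * Nat.factorial (k+1) := by
    push_cast [Nat.factorial_succ]; ring
  have f1 : (Nat.factorial k : ℝ) ≠ 0 := by positivity
  have f2 : (Nat.factorial (k+1) : ℝ) ≠ 0 := by positivity
  field_simp [e1, e2]
  simp only [add_comm 1 k, add_comm 2 k, e1, e2]; push_cast; ring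

lemma key (n : ℕ) :
    (∀ x : ℝ, R (2*n+1) 2 1 x = 0) ∧ (∀ x : ℝ, R (2*n+1+1) 2 2 x = 0) ∧
    (∀ x : ℝ, R (2*n+1) 2 2 x = F (2*n) x) ∧
    (∀ x : ℝ, R (2*n+1+1) 2 1 x = F (2*n+1) x) := by
  induction n with
  | zero =>
    have c1 : ∀ x : ℝ, R 1 2 1 x = 0 := by intro x; simp [R]
    have c3 : ∀ x : ℝ, R 1 2 2 x = F 0 x := by
      intro x; simp [R, R_one, F, Nat.factorial]
    refine ⟨c1, ?_, c3, ?_⟩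
    · intro x
      simp only [R, R_one]
      simp [intervalIntegral.integral_congr (g := fun _ : ℝ => (0:ℝ)) (fun v _ => c1 v)]
    · intro x
      show (if (2:ℕ) ≤ 1 then (0:ℝ) else ∫ v in (0:ℝ)..x, R 1 2 2 v) = F 1 x
      rw [if_neg (by norm_num), intervalIntegral.integral_congr (g := F 0) (fun v _ => c3 v),
        integF]
  | succ n ih =>
    obtain ⟨ih1, ih2, ih3, ih4⟩ := ih
    have e1 : 2*(n+1)+1 = (2*n+1+1)+1 := by ring
    have e2 : 2*(n+1)+1+1 = ((2*n+1+1)+1)+1 := by ring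
    have c1 : ∀ x : ℝ, R (2*(n+1)+1) 2 1 x = 0 := by
      intro x
      rw [e1]
      show (if (2:ℕ) ≤ 1 then (0:ℝ) else ∫ v in (0:ℝ)..x, R (2*n+1+1) 2 2 v) = 0
      rw [if_neg (by norm_num)]
      simp [intervalIntegral.integral_congr (g := fun _ : ℝ => (0:ℝ)) (fun v _ => ih2 v)]
    have c3 : ∀ x : ℝ, R (2*(n+1)+1) 2 2 x = F (2*(n+1)) x := by
      intro x
      rw [e1]
      show (if (2:ℕ) ≤ 1 then (0:ℝ) else
        (1-x) * R (2*n+1+1) 1 1 x + ∫ v in (0:ℝ)..x, R (2*n+1+1) 2 1 v) = F (2*(n+1)) x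
      rw [if_neg (by norm_num), R_one,
        intervalIntegral.integral_congr (g := F (2*n+1)) (fun v _ => ih4 v), integF]
      have : 2*n+1+1 = 2*(n+1) := by ring
      rw [this]
      simp
    refine ⟨c1, ?_, c3, ?_⟩
    · intro x
      rw [e2]
      show (if (2:ℕ) ≤ 1 then (0:ℝ) else
        (1-x) * R ((2*n+1+1)+1) 1 1 x + ∫ v in (0:ℝ)..x, R ((2*n+1+1)+1) 2 1 v) = 0
      rw [if_neg (by norm_num), R_one]
      have : ∀ v : ℝ, R ((2*n+1+1)+1) 2 1 v = 0 := by
        intro v; have := c1 v; rwa [e1] at this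
      simp [intervalIntegral.integral_congr (g := fun _ : ℝ => (0:ℝ)) (fun v _ => this v)]
    · intro x
      rw [e2]
      show (if (2:ℕ) ≤ 1 then (0:ℝ) else ∫ v in (0:ℝ)..x, R ((2*n+1+1)+1) 2 2 v)
        = F (2*(n+1)+1) x
      rw [if_neg (by norm_num)]
      have : ∀ v : ℝ, R ((2*n+1+1)+1) 2 2 v = F (2*(n+1)) v := by
        intro v; have := c3 v; rwa [e1] at this
      rw [intervalIntegral.integral_congr (g := F (2*(n+1))) (fun v _ => this v), integF]

lemma inj2 : Function.Injective (fun k : ℕ => 2*k) := fun a b h => by simp only [] at h; omega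
lemma inj2' : Function.Injective (fun k : ℕ => 2*k+1) := fun a b h => by simp only [] at h; omega

lemma pair_hasSum {f : ℕ → ℝ} {a : ℝ} (hf : HasSum f a) :
    HasSum (fun k => f (2*k) + f (2*k+1)) a := by
  have he := (hf.summable.comp_injective inj2).hasSum
  have ho := (hf.summable.comp_injective inj2').hasSum
  have h := he.add ho
  rwa [(HasSum.even_add_odd he ho).unique hf] at h

lemma exp_hasSum (x : ℝ) : HasSum (fun n : ℕ => (-x) ^ n / Nat.factorial n) (Real.exp (-x)) := by
  rw [Real.exp_eq_exp_ℝ]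
  exact NormedSpace.expSeries_div_hasSum_exp (-x)

lemma P22 (x : ℝ) : P 2 2 x = Real.exp (-x) := by
  have hpair := pair_hasSum (exp_hasSum x)
  have hF : ∀ k : ℕ, F (2*k) x = (-x)^(2*k) / Nat.factorial (2*k) + (-x)^(2*k+1) / Nat.factorial (2*k+1) := by
    intro k
    rw [Even.neg_pow (even_two_mul k), pow_succ, Even.neg_pow (even_two_mul k)]
    simp [F, pow_succ]; ring
  have hsum : HasSum (fun k => R (2*k+1) 2 2 x) (Real.exp (-x)) := by
    refine HasSum.congr_fun hpair fun k => ?_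
    rw [(key k).2.2.1 x, hF k]
  have hsupp : Function.support (fun n => R n 2 2 x) ⊆ Set.range (fun k : ℕ => 2*k+1) := by
    intro n hn
    rcases Nat.even_or_odd n with ⟨m, rfl⟩ | ⟨m, rfl⟩
    · exfalso; apply hn
      match m with
      | 0 => simp [R]
      | j+1 =>
        have := (key j).2.1 x
        have e : 2*j+1+1 = (j+1) + (j+1) := by ring
        rwa [e] at this
    · exact ⟨m, rfl⟩
  rw [P, ← Function.Injective.tsum_eq inj2' hsupp]
  exact hsum.tsum_eq

lemma P21 (x : ℝ) : P 2 1 x = 1 - Real.exp (-x) := by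
  have hf := exp_hasSum x
  have hg : HasSum (fun n : ℕ => (-x)^(n+1) / Nat.factorial (n+1)) (Real.exp (-x) - 1) := by
    refine (hasSum_nat_add_iff (f := fun n : ℕ => (-x) ^ n / Nat.factorial n) 1).2 ?_
    convert hf using 1
    · rfl
    simp
  have hpair := (pair_hasSum hg).neg
  have hF : ∀ k : ℕ, F (2*k+1) x = -((-x)^(2*k+1) / Nat.factorial (2*k+1) + (-x)^(2*k+1+1) / Nat.factorial (2*k+1+1)) := by
    intro k
    rw [pow_succ ((-x)) (2*k+1), pow_succ ((-x)) (2*k), Even.neg_pow (even_two_mul k)]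
    simp [F, pow_succ]; ring
  have hsum : HasSum (fun k => R (2*k+1+1) 2 1 x) (1 - Real.exp (-x)) := by
    have h0 : (1 : ℝ) - Real.exp (-x) = -(Real.exp (-x) - 1) := by ring
    rw [h0]
    refine HasSum.congr_fun hpair fun k => ?_
    rw [(key k).2.2.2 x, hF k]
  have hsupp : Function.support (fun n => R n 2 1 x) ⊆ Set.range (fun k : ℕ => 2*k+1+1) := by
    intro n hn
    rcases Nat.even_or_odd n with ⟨m, rfl⟩ | ⟨m, rfl⟩
    · match m with
      | 0 => exfalso; apply hn; simp [R]
      | j+1 =>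
        exact ⟨j, by show 2*j+1+1 = (j+1)+(j+1); omega⟩
    · exfalso; apply hn
      have := (key m).1 x
      have e : 2*m+1 = 2*m+1 := rfl
      rwa [show 2*m+1 = 2*m+1 from rfl] at this
  rw [P, ← Function.Injective.tsum_eq (g := fun k : ℕ => 2*k+1+1) (fun a b h => by simp only [] at h; omega) hsupp]
  exact hsum.tsum_eq


/-- For the 2-player game: `P_{2,1}(x) = 1 − e^{−x}` and `P_{2,2}(x) = e^{−x}` for
`x ∈ [0,1]`; in particular `P_{2,1} = 1 − e^{−1}` and `P_{2,2} = e^{−1}`. -/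
theorem P_two_players :
    (∀ x ∈ Set.Icc (0:ℝ) 1, P 2 1 x = 1 - Real.exp (-x) ∧ P 2 2 x = Real.exp (-x)) ∧
    P 2 1 1 = 1 - Real.exp (-1) ∧ P 2 2 1 = Real.exp (-1) := by
  exact ⟨fun x _ => ⟨P21 x, P22 x⟩, P21 1, P22 1⟩
end
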